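/- arXiv:1805.02106 — 6 statements merged into one kernel-verified Lean document; each statement's English description precedes it below -/
import Mathlib

section
/- Let a, b > 1, κ > 0, and let p satisfy the standing assumptions (decreasing, p(1)=0, lim_{M→1} -(1-M)^{1+κ} p'(M)/p(M) = c > 0). Define q(M) = (p(M)/M) ∫₀^M s^a (1-s)^{-b} p(s)^{-2} ds for 0 < M < 1. Then there exists a constant C₁ > 0 such that lim_{M→1} p(M) q(M) / (1-M)^{1+κ-b} = C₁. -/
open Real Set Filter Topology

lemma my_lhopital (F G F' G' : ℝ → ℝ) (l : ℝ) (hl : 0 < l)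
    (hFd : ∀ᶠ x in 𝓝[<] (1:ℝ), HasDerivAt F (F' x) x)
    (hGd : ∀ᶠ x in 𝓝[<] (1:ℝ), HasDerivAt G (G' x) x)
    (hG' : ∀ᶠ x in 𝓝[<] (1:ℝ), 0 < G' x)
    (hFtop : Tendsto F (𝓝[<] (1:ℝ)) atTop)
    (hratio : Tendsto (fun x => F' x / G' x) (𝓝[<] (1:ℝ)) (𝓝 l)) :
    Tendsto (fun x => F x / G x) (𝓝[<] (1:ℝ)) (𝓝 l) := by
  rw [Metric.tendsto_nhds]
  intro ε hε
  set ε₁ : ℝ := min (ε / 2) (l / 2) with hε₁def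
  have hε₁ : 0 < ε₁ := lt_min (by linarith) (by linarith)
  have hε₁ε : ε₁ ≤ ε / 2 := min_le_left _ _
  have hε₁l : ε₁ ≤ l / 2 := min_le_right _ _
  have hrat' : ∀ᶠ x in 𝓝[<] (1:ℝ), |F' x / G' x - l| < ε₁ := by
    have := hratio (Metric.ball_mem_nhds l hε₁)
    filter_upwards [this] with x hx
    simpa [Real.dist_eq] using hx
  have hall : ∀ᶠ x in 𝓝[<] (1:ℝ),
      HasDerivAt F (F' x) x ∧ HasDerivAt G (G' x) x ∧ 0 < G' x ∧ |F' x / G' x - l| < ε₁ := by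
    filter_upwards [hFd, hGd, hG', hrat'] with x h1 h2 h3 h4 using ⟨h1, h2, h3, h4⟩
  rw [Filter.Eventually, mem_nhdsLT_iff_exists_Ioo_subset] at hall
  obtain ⟨u, hu, hsub⟩ := hall
  have hu1 : u < 1 := hu
  -- base point w
  set w : ℝ := (u + 1) / 2 with hwdef
  have hw : w ∈ Ioo u 1 := ⟨by simp [hwdef]; linarith, by simp [hwdef]; linarith⟩
  -- Key ratio claim on Ioo w 1
  have key : ∀ x ∈ Ioo w 1, ∃ R : ℝ, |R - l| < ε₁ ∧ 0 < G x - G w ∧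
      F x - F w = R * (G x - G w) := by
    intro x hx
    have hwx : w < x := hx.1
    have hIccsub : Icc w x ⊆ Ioo u 1 := fun y hy => ⟨lt_of_lt_of_le hw.1 hy.1, lt_of_le_of_lt hy.2 hx.2⟩
    have hIoosub : Ioo w x ⊆ Ioo u 1 := fun y hy => hIccsub ⟨hy.1.le, hy.2.le⟩
    have hFc : ContinuousOn F (Icc w x) := fun y hy =>
      ((hsub (hIccsub hy)).1.continuousAt).continuousWithinAt
    have hGc : ContinuousOn G (Icc w x) := fun y hy =>
      ((hsub (hIccsub hy)).2.1.continuousAt).continuousWithinAt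
    have hFd' : ∀ y ∈ Ioo w x, HasDerivAt F (F' y) y := fun y hy => (hsub (hIoosub hy)).1
    have hGd' : ∀ y ∈ Ioo w x, HasDerivAt G (G' y) y := fun y hy => (hsub (hIoosub hy)).2.1
    -- G x - G w > 0 by Lagrange MVT
    obtain ⟨ξ, hξ, hξeq⟩ := exists_hasDerivAt_eq_slope G G' hwx hGc hGd'
    have hGpos : 0 < G x - G w := by
      have h1 : 0 < G' ξ := (hsub (hIoosub hξ)).2.2.1
      have h2 : 0 < (G x - G w) / (x - w) := hξeq ▸ h1
      have := (div_pos_iff.mp h2)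
      rcases this with ⟨h, _⟩ | ⟨_, h⟩
      · exact h
      · linarith [hwx]
    -- Cauchy MVT
    obtain ⟨y, hy, hyeq⟩ := exists_ratio_hasDerivAt_eq_ratio_slope F F' hwx hFc hFd' G G' hGc hGd'
    refine ⟨F' y / G' y, (hsub (hIoosub hy)).2.2.2, hGpos, ?_⟩
    have hGy : G' y ≠ 0 := ne_of_gt (hsub (hIoosub hy)).2.2.1
    field_simp
    linarith [hyeq]
  -- G tends to atTop
  have hIoo_mem : Ioo w (1:ℝ) ∈ 𝓝[<] (1:ℝ) := Ioo_mem_nhdsLT_of_mem ⟨hw.2, le_refl _⟩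
  have hFW : ∀ᶠ x in 𝓝[<] (1:ℝ), F w ≤ F x := hFtop.eventually (eventually_ge_atTop (F w))
  have hGtop : Tendsto G (𝓝[<] (1:ℝ)) atTop := by
    have hlow : (fun x => G w + (F x - F w) / (l + ε₁)) ≤ᶠ[𝓝[<] (1:ℝ)] G := ?_
    rotate_left
    · filter_upwards [hIoo_mem, hFW] with x hx hFx
      obtain ⟨R, hR, hGpos, hFeq⟩ := key x hx
      have hRle : R ≤ l + ε₁ := by cases abs_lt.mp hR; linarith
      have hRpos : 0 < R := by cases abs_lt.mp hR; linarith
      have h1 : F x - F w ≤ (l + ε₁) * (G x - G w) := by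
        rw [hFeq]
        exact mul_le_mul_of_nonneg_right hRle hGpos.le
      have hlε : 0 < l + ε₁ := by linarith
      have h2 : (F x - F w) / (l + ε₁) ≤ G x - G w := (div_le_iff₀ hlε).mpr (by nlinarith)
      linarith
    · have h0 : Tendsto (fun x => F x - F w) (𝓝[<] (1:ℝ)) atTop := by
        simpa [sub_eq_add_neg] using tendsto_atTop_add_const_right (𝓝[<] (1:ℝ)) (-(F w)) hFtop
      have h1 := h0.atTop_div_const (show (0:ℝ) < l + ε₁ by linarith)
      exact tendsto_atTop_mono' _ hlow (tendsto_atTop_add_const_left _ (G w) h1)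
  -- constant K
  set K : ℝ := |F w| + (l + ε₁) * |G w| + 1 with hKdef
  have hK : 0 < K := by positivity
  have hGbig : ∀ᶠ x in 𝓝[<] (1:ℝ), 2 * K / ε < G x ∧ 0 < G x :=
    (hGtop.eventually (eventually_gt_atTop (2 * K / ε))).and
      (hGtop.eventually (eventually_gt_atTop 0))
  filter_upwards [hIoo_mem, hGbig] with x hx ⟨hGK, hGpos0⟩
  obtain ⟨R, hR, hGpos, hFeq⟩ := key x hx
  have hRle : R ≤ l + ε₁ := by cases abs_lt.mp hR; linarith
  have hFG : F x / G x = R + (F w - R * G w) / G x := by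
    field_simp
    linarith [hFeq]
  rw [Real.dist_eq, hFG]
  have habs : |F w - R * G w| ≤ K - 1 := by
    have : |R * G w| ≤ (l + ε₁) * |G w| := by
      rw [abs_mul]
      apply mul_le_mul_of_nonneg_right _ (abs_nonneg _)
      calc |R| ≤ |R - l| + |l| := by
            have := abs_sub_abs_le_abs_sub R l; have := abs_add_le (R - l) l; 
            calc |R| = |(R - l) + l| := by ring_nf
              _ ≤ |R - l| + |l| := abs_add_le _ _
        _ ≤ ε₁ + l := by rw [abs_of_pos hl]; linarith [hR.le]
        _ = l + ε₁ := by ring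
    calc |F w - R * G w| ≤ |F w| + |R * G w| := abs_sub _ _
      _ ≤ |F w| + (l + ε₁) * |G w| := by linarith
      _ = K - 1 := by rw [hKdef]; ring
  have hterm : |(F w - R * G w) / G x| < ε / 2 := by
    rw [abs_div, abs_of_pos hGpos0]
    rw [div_lt_iff₀ hGpos0]
    have h2 : 2 * K / ε < G x := hGK
    have h3 : 2 * K < ε * G x := by
      rw [div_lt_iff₀ hε] at h2; linarith [mul_comm (G x) ε]
    calc |F w - R * G w| ≤ K - 1 := habs
      _ < K := by linarith
      _ ≤ ε / 2 * G x := by linarith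
  calc |R + (F w - R * G w) / G x - l| ≤ |R - l| + |(F w - R * G w) / G x| := by
        have := abs_add_le (R - l) ((F w - R * G w) / G x)
        calc |R + (F w - R * G w) / G x - l| = |(R - l) + (F w - R * G w) / G x| := by ring_nf
          _ ≤ _ := abs_add_le _ _
    _ < ε₁ + ε / 2 := by linarith [hR]
    _ ≤ ε := by linarith

theorem stmt_1 (a b κ c : ℝ) (ha : 1 < a) (hb : 1 < b) (hκ : 0 < κ) (hc : 0 < c)
    (p p' q : ℝ → ℝ)
    (hcont : ContinuousOn p (Set.Icc 0 1))
    (hpos : ∀ M ∈ Set.Ico (0:ℝ) 1, 0 < p M)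
    (hderiv : ∀ M ∈ Set.Ico (0:ℝ) 1, HasDerivAt p (p' M) M)
    (hdec : StrictAntiOn p (Set.Icc 0 1))
    (hp1 : p 1 = 0)
    (hlim : Tendsto (fun M => -(1 - M) ^ (1 + κ) * p' M / p M)
      (nhdsWithin 1 (Set.Iio 1)) (nhds c))
    (hq : ∀ M ∈ Set.Ioo (0:ℝ) 1,
      q M = (p M / M) * ∫ s in (0:ℝ)..M, s ^ a * (1 - s) ^ (-b) * (p s) ^ (-(2:ℝ))) :
    ∃ C₁ > 0, Tendsto (fun M => p M * q M / (1 - M) ^ (1 + κ - b))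
      (nhdsWithin 1 (Set.Iio 1)) (nhds C₁) := by
  have ha0 : (0:ℝ) ≤ a := by linarith
  set f : ℝ → ℝ := fun s => s ^ a * (1 - s) ^ (-b) * p s ^ (-(2:ℝ)) with hfdef
  set F : ℝ → ℝ := fun x => ∫ s in (0:ℝ)..x, f s with hFdef
  set G : ℝ → ℝ := fun x => (1 - x) ^ (1 + κ - b) * p x ^ (-(2:ℝ)) with hGdef
  set d : ℝ → ℝ := fun x =>
    (b - 1 - κ) * (1 - x) ^ κ + 2 * (-(1 - x) ^ (1 + κ) * p' x / p x) with hddef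
  set G' : ℝ → ℝ := fun x => (1 - x) ^ (-b) * p x ^ (-(2:ℝ)) * d x with hG'def
  -- continuity of f
  have fcont0 : ContinuousOn f (Ico 0 1) := by
    apply ContinuousOn.mul
    apply ContinuousOn.mul
    · exact continuousOn_id.rpow_const (fun s _ => Or.inr ha0)
    · exact (continuous_const.sub continuous_id).continuousOn.rpow_const
        (fun s hs => Or.inl (by show (1:ℝ) - s ≠ 0; rw [sub_ne_zero]; intro h; exact absurd h.symm (ne_of_lt hs.2)))
    · exact (hcont.mono (fun y (hy : y ∈ Ico (0:ℝ) 1) => ⟨hy.1, hy.2.le⟩)).rpow_const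
        (fun s hs => Or.inl (ne_of_gt (hpos s hs)))
  have fcont : ∀ x : ℝ, x < 1 → ContinuousOn f (Icc 0 x) := fun x hx =>
    fcont0.mono (fun y hy => ⟨hy.1, lt_of_le_of_lt hy.2 hx⟩)
  have fcontAt : ∀ x ∈ Ioo (0:ℝ) 1, ContinuousAt f x := fun x hx =>
    (fcont0.mono Ioo_subset_Ico_self).continuousAt (Ioo_mem_nhds hx.1 hx.2)
  have fpos : ∀ x ∈ Ioo (0:ℝ) 1, 0 < f x := by
    intro x hx
    have h1 : (0:ℝ) < 1 - x := by linarith [hx.2]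
    have h2 : 0 < p x := hpos x ⟨hx.1.le, hx.2⟩
    have := Real.rpow_pos_of_pos hx.1 a
    have := Real.rpow_pos_of_pos h1 (-b)
    have := Real.rpow_pos_of_pos h2 (-(2:ℝ))
    simp only [hfdef]
    positivity
  have hIoo_mem : Ioo (0:ℝ) 1 ∈ 𝓝[<] (1:ℝ) := Ioo_mem_nhdsLT_of_mem ⟨one_pos, le_refl _⟩
  -- F derivative
  have hFd : ∀ x ∈ Ioo (0:ℝ) 1, HasDerivAt F (f x) x := by
    intro x hx
    apply intervalIntegral.integral_hasDerivAt_right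
    · apply ContinuousOn.intervalIntegrable
      rw [uIcc_of_le hx.1.le]
      exact fcont x hx.2
    · exact ContinuousAt.stronglyMeasurableAtFilter isOpen_Ioo fcontAt x hx
    · exact fcontAt x hx
  -- G derivative
  have hGd : ∀ x ∈ Ioo (0:ℝ) 1, HasDerivAt G (G' x) x := by
    intro x hx
    have h1x : (0:ℝ) < 1 - x := by linarith [hx.2]
    have hpx : 0 < p x := hpos x ⟨hx.1.le, hx.2⟩
    have hinner : HasDerivAt (fun y : ℝ => 1 - y) (-1) x := (hasDerivAt_id x).const_sub 1
    have hA : HasDerivAt (fun y : ℝ => (1 - y) ^ (1 + κ - b))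
        ((1 + κ - b) * (1 - x) ^ (1 + κ - b - 1) * (-1)) x :=
      (Real.hasDerivAt_rpow_const (p := 1 + κ - b) (Or.inl h1x.ne')).comp x hinner
    have hB : HasDerivAt (fun y => p y ^ (-(2:ℝ))) ((-(2:ℝ)) * p x ^ (-(2:ℝ) - 1) * p' x) x :=
      (Real.hasDerivAt_rpow_const (p := -(2:ℝ)) (Or.inl hpx.ne')).comp x
        (hderiv x ⟨hx.1.le, hx.2⟩)
    have hmul := hA.mul hB
    refine hmul.congr_deriv ?_
    have e1 : (1 - x) ^ (1 + κ - b - 1) = (1 - x) ^ κ * (1 - x) ^ (-b) := by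
      rw [show (1 + κ - b - 1) = κ + (-b) by ring, Real.rpow_add h1x]
    have e2 : (1 - x) ^ (1 + κ - b) = (1 - x) ^ (1 + κ) * (1 - x) ^ (-b) := by
      rw [show (1 + κ - b) = (1 + κ) + (-b) by ring, Real.rpow_add h1x]
    have e3 : p x ^ (-(2:ℝ) - 1) = p x ^ (-(2:ℝ)) * (p x)⁻¹ := by
      rw [Real.rpow_sub hpx, Real.rpow_one, div_eq_mul_inv]
    simp only [hG'def, hddef, e1, e2, e3]
    field_simp
    ring
  -- limit of d
  have ht1 : Tendsto (fun x : ℝ => 1 - x) (𝓝[<] (1:ℝ)) (𝓝 0) := by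
    have h : Tendsto (fun x : ℝ => 1 - x) (𝓝 (1:ℝ)) (𝓝 (1 - 1)) :=
      tendsto_const_nhds.sub tendsto_id
    simpa using h.mono_left nhdsWithin_le_nhds
  have hd : Tendsto d (𝓝[<] (1:ℝ)) (𝓝 (2 * c)) := by
    have ht2 : Tendsto (fun x : ℝ => (1 - x) ^ κ) (𝓝[<] (1:ℝ)) (𝓝 0) := by
      have h := (Real.continuousAt_rpow_const 0 κ (Or.inr hκ.le)).tendsto
      have h2 := h.comp ht1
      simpa [Real.zero_rpow hκ.ne', Function.comp_def] using h2
    have h3 := (ht2.const_mul (b - 1 - κ)).add (hlim.const_mul 2)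
    rw [mul_zero, zero_add] at h3
    exact h3.congr (fun x => by simp only [hddef]; try ring)
  have hdpos : ∀ᶠ x in 𝓝[<] (1:ℝ), 0 < d x :=
    hd.eventually (eventually_gt_nhds (by linarith))
  -- ratio limit
  have hratio : Tendsto (fun x => f x / G' x) (𝓝[<] (1:ℝ)) (𝓝 (1 / (2 * c))) := by
    have hxa : Tendsto (fun x : ℝ => x ^ a) (𝓝[<] (1:ℝ)) (𝓝 1) := by
      have h : ContinuousAt (fun x : ℝ => x ^ a) 1 :=
        Real.continuousAt_rpow_const 1 a (Or.inl one_ne_zero)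
      simpa [Real.one_rpow] using h.tendsto.mono_left nhdsWithin_le_nhds
    have hquot : Tendsto (fun x => x ^ a / d x) (𝓝[<] (1:ℝ)) (𝓝 (1 / (2 * c))) :=
      hxa.div hd (by positivity)
    apply hquot.congr'
    filter_upwards [hIoo_mem, hdpos] with x hx hdx
    have h1x : (0:ℝ) < 1 - x := by linarith [hx.2]
    have hpx : 0 < p x := hpos x ⟨hx.1.le, hx.2⟩
    have hA : (0:ℝ) < (1 - x) ^ (-b) * p x ^ (-(2:ℝ)) := by
      have := Real.rpow_pos_of_pos h1x (-b)
      have := Real.rpow_pos_of_pos hpx (-(2:ℝ))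
      positivity
    have : f x = ((1 - x) ^ (-b) * p x ^ (-(2:ℝ))) * x ^ a := by
      simp only [hfdef]; ring
    rw [this, hG'def, mul_div_mul_left _ _ hA.ne']
  -- F tends to atTop
  have hFtop : Tendsto F (𝓝[<] (1:ℝ)) atTop := by
    have hp12 : 0 < p (1/2 : ℝ) := hpos _ (by norm_num)
    set c₀ : ℝ := (1/2 : ℝ) ^ a * p (1/2 : ℝ) ^ (-(2:ℝ)) with hc₀def
    have hc₀ : 0 < c₀ := by
      have := Real.rpow_pos_of_pos (show (0:ℝ) < 1/2 by norm_num) a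
      have := Real.rpow_pos_of_pos hp12 (-(2:ℝ))
      positivity
    set B : ℝ → ℝ := fun x =>
      F (1/2 : ℝ) + c₀ * (((1 - x) ^ (1 - b) - (1/2 : ℝ) ^ (1 - b)) / (b - 1)) with hBdef
    have hkey : ∀ x ∈ Ioo (1/2 : ℝ) 1, B x ≤ F x := by
      intro x hx
      have hx1 : x < 1 := hx.2
      have hhx : (1/2 : ℝ) < x := hx.1
      have hint1 : IntervalIntegrable f MeasureTheory.volume 0 (1/2 : ℝ) := by
        apply ContinuousOn.intervalIntegrable
        rw [uIcc_of_le (by norm_num)]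
        exact fcont (1/2) (by norm_num)
      have hint2 : IntervalIntegrable f MeasureTheory.volume (1/2 : ℝ) x := by
        apply ContinuousOn.intervalIntegrable
        rw [uIcc_of_le hhx.le]
        exact (fcont x hx1).mono (Icc_subset_Icc (by norm_num) le_rfl)
      have hcontg : ContinuousOn (fun s : ℝ => (1 - s) ^ (-b)) (Icc (1/2 : ℝ) x) :=
        (continuous_const.sub continuous_id).continuousOn.rpow_const
          (fun s hs => Or.inl (by have : s < 1 := lt_of_le_of_lt hs.2 hx1; intro h
                                  change (1:ℝ) - s = 0 at h; rw [sub_eq_zero] at h; exact absurd h.symm (ne_of_lt this)))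
      have hintg : IntervalIntegrable (fun s : ℝ => c₀ * (1 - s) ^ (-b))
          MeasureTheory.volume (1/2 : ℝ) x := by
        apply ContinuousOn.intervalIntegrable
        rw [uIcc_of_le hhx.le]
        exact continuousOn_const.mul hcontg
      have hintg' : IntervalIntegrable (fun s : ℝ => (1 - s) ^ (-b))
          MeasureTheory.volume (1/2 : ℝ) x := by
        apply ContinuousOn.intervalIntegrable
        rw [uIcc_of_le hhx.le]
        exact hcontg
      have hsplit : F x = F (1/2 : ℝ) + ∫ s in (1/2 : ℝ)..x, f s := by
        simp only [hFdef]
        rw [← intervalIntegral.integral_add_adjacent_intervals hint1 hint2]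
      have hmono : (∫ s in (1/2 : ℝ)..x, c₀ * (1 - s) ^ (-b)) ≤ ∫ s in (1/2 : ℝ)..x, f s := by
        apply intervalIntegral.integral_mono_on hhx.le hintg hint2
        intro s hs
        have hs1 : s < 1 := lt_of_le_of_lt hs.2 hx1
        have hs0 : (0:ℝ) < s := lt_of_lt_of_le (by norm_num) hs.1
        have h1s : (0:ℝ) < 1 - s := by linarith
        have hps : 0 < p s := hpos s ⟨hs0.le, hs1⟩
        have hsa : (1/2 : ℝ) ^ a ≤ s ^ a := Real.rpow_le_rpow (by norm_num) hs.1 ha0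
        have hple : p s ≤ p (1/2 : ℝ) := by
          rcases eq_or_lt_of_le hs.1 with h | h
          · rw [← h]
          · exact (hdec ⟨by norm_num, by norm_num⟩ ⟨hs0.le, hs1.le⟩ h).le
        have hsp : p (1/2 : ℝ) ^ (-(2:ℝ)) ≤ p s ^ (-(2:ℝ)) :=
          Real.rpow_le_rpow_of_nonpos hps hple (by norm_num)
        have hmul : (1/2 : ℝ) ^ a * p (1/2 : ℝ) ^ (-(2:ℝ)) ≤ s ^ a * p s ^ (-(2:ℝ)) :=
          mul_le_mul hsa hsp (Real.rpow_nonneg hp12.le _) (Real.rpow_nonneg hs0.le _)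
        have hgnn : (0:ℝ) ≤ (1 - s) ^ (-b) := Real.rpow_nonneg h1s.le _
        calc c₀ * (1 - s) ^ (-b) = ((1/2 : ℝ) ^ a * p (1/2 : ℝ) ^ (-(2:ℝ))) * (1 - s) ^ (-b) := rfl
          _ ≤ (s ^ a * p s ^ (-(2:ℝ))) * (1 - s) ^ (-b) :=
              mul_le_mul_of_nonneg_right hmul hgnn
          _ = f s := by simp only [hfdef]; ring
      have hA : ∀ s ∈ uIcc (1/2 : ℝ) x,
          HasDerivAt (fun s : ℝ => (1 - s) ^ (1 - b) / (b - 1)) ((1 - s) ^ (-b)) s := by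
        intro s hs
        rw [uIcc_of_le hhx.le] at hs
        have h1s : (0:ℝ) < 1 - s := by have : s < 1 := lt_of_le_of_lt hs.2 hx1; linarith
        have hinner : HasDerivAt (fun y : ℝ => 1 - y) (-1) s := (hasDerivAt_id s).const_sub 1
        have hcomp := ((Real.hasDerivAt_rpow_const (p := 1 - b)
          (Or.inl h1s.ne')).comp s hinner).div_const (b - 1)
        refine hcomp.congr_deriv ?_
        rw [show (1 - b - 1) = -b by ring]
        have hb1 : b - 1 ≠ 0 := sub_ne_zero.mpr (ne_of_gt hb)
        field_simp
        ring
      have hcalc : (∫ s in (1/2 : ℝ)..x, (1 - s) ^ (-b))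
          = (1 - x) ^ (1 - b) / (b - 1) - (1 - (1/2 : ℝ)) ^ (1 - b) / (b - 1) :=
        intervalIntegral.integral_eq_sub_of_hasDerivAt hA hintg'
      have hconst : (∫ s in (1/2 : ℝ)..x, c₀ * (1 - s) ^ (-b))
          = c₀ * ∫ s in (1/2 : ℝ)..x, (1 - s) ^ (-b) := by
        rw [intervalIntegral.integral_const_mul]
      have h12 : (1 : ℝ) - 1/2 = 1/2 := by norm_num
      rw [hsplit]
      simp only [hBdef]
      rw [hconst, hcalc, h12] at hmono
      have : c₀ * (((1 - x) ^ (1 - b) - (1/2 : ℝ) ^ (1 - b)) / (b - 1))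
          = c₀ * ((1 - x) ^ (1 - b) / (b - 1) - (1/2 : ℝ) ^ (1 - b) / (b - 1)) := by ring
      rw [this]
      linarith
    have h4 : Tendsto (fun x : ℝ => (1 - x) ^ (1 - b)) (𝓝[<] (1:ℝ)) atTop := by
      have h2 : Tendsto (fun x : ℝ => (1 - x) ^ (b - 1)) (𝓝[<] (1:ℝ)) (𝓝[>] (0:ℝ)) := by
        apply tendsto_nhdsWithin_of_tendsto_nhds_of_eventually_within
        · have hcontb : ContinuousAt (fun z : ℝ => z ^ (b - 1)) 0 :=
            Real.continuousAt_rpow_const 0 (b - 1) (Or.inr (by linarith))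
          have h := hcontb.tendsto.comp ht1
          have hb1 : b - 1 ≠ 0 := sub_ne_zero.mpr (ne_of_gt hb)
          simpa [Real.zero_rpow hb1, Function.comp_def] using h
        · filter_upwards [self_mem_nhdsWithin] with x (hx : x ∈ Iio (1:ℝ))
          exact Real.rpow_pos_of_pos (by simp only [mem_Iio] at hx; linarith) _
      have h3 : Tendsto (fun x : ℝ => ((1 - x) ^ (b - 1))⁻¹) (𝓝[<] (1:ℝ)) atTop :=
        tendsto_inv_nhdsGT_zero.comp h2
      apply h3.congr'
      filter_upwards [self_mem_nhdsWithin] with x (hx : x ∈ Iio (1:ℝ))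
      have h1x : (0:ℝ) < 1 - x := by simp only [mem_Iio] at hx; linarith
      rw [← Real.rpow_neg h1x.le, show -(b - 1) = 1 - b by ring]
    have h5 : Tendsto B (𝓝[<] (1:ℝ)) atTop := by
      apply tendsto_atTop_add_const_left
      have h6 := (tendsto_atTop_add_const_right (𝓝[<] (1:ℝ))
        (-((1/2 : ℝ) ^ (1 - b))) h4).atTop_div_const (show (0:ℝ) < b - 1 by linarith)
      have h7 := h6.const_mul_atTop hc₀
      exact h7.congr (fun x => by ring_nf)
    apply tendsto_atTop_mono' _ _ h5
    filter_upwards [Ioo_mem_nhdsLT_of_mem (show (1:ℝ) ∈ Ioc (1/2 : ℝ) 1 by norm_num)]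
      with x hx using hkey x hx
  -- apply lhopital
  have key : Tendsto (fun x => F x / G x) (𝓝[<] (1:ℝ)) (𝓝 (1 / (2 * c))) := by
    apply my_lhopital F G f G' _ (by positivity)
    · filter_upwards [hIoo_mem] with x hx using hFd x hx
    · filter_upwards [hIoo_mem] with x hx using hGd x hx
    · filter_upwards [hIoo_mem, hdpos] with x hx hdx
      have h1 : (0:ℝ) < 1 - x := by linarith [hx.2]
      have h2 : 0 < p x := hpos x ⟨hx.1.le, hx.2⟩
      have := Real.rpow_pos_of_pos h1 (-b)
      have := Real.rpow_pos_of_pos h2 (-(2:ℝ))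
      simp only [hG'def]
      positivity
    · exact hFtop
    · exact hratio
  refine ⟨1 / (2 * c), by positivity, ?_⟩
  -- rewrite target as (F/G) * (1/M)
  have heq : ∀ᶠ M in 𝓝[<] (1:ℝ),
      F M / G M * (1 / M) = p M * q M / (1 - M) ^ (1 + κ - b) := by
    filter_upwards [hIoo_mem] with M hM
    have hpM : 0 < p M := hpos M ⟨hM.1.le, hM.2⟩
    have h1M : (0:ℝ) < 1 - M := by linarith [hM.2]
    have he : 0 < (1 - M) ^ (1 + κ - b) := Real.rpow_pos_of_pos h1M _
    have hq' := hq M hM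
    have hrp : p M ^ (-(2:ℝ)) = (p M ^ (2:ℕ))⁻¹ := by
      rw [show (-(2:ℝ)) = -((2:ℕ):ℝ) by norm_num, Real.rpow_neg hpM.le, Real.rpow_natCast]
    rw [hq']
    simp only [hFdef, hGdef, hrp]
    field_simp
  have hM1 : Tendsto (fun M : ℝ => 1 / M) (𝓝[<] (1:ℝ)) (𝓝 1) := by
    have h : Tendsto (fun M : ℝ => 1 / M) (𝓝 (1:ℝ)) (𝓝 (1/1)) :=
      (continuousAt_const.div continuousAt_id one_ne_zero).tendsto
    simpa using h.mono_left nhdsWithin_le_nhds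
  have := key.mul hM1
  rw [mul_one] at this
  exact Tendsto.congr' heq this
end

section
/- Let a, b > 1, κ > 0, and let p, q be as in the biofilm model (q(M) = (p(M)/M) ∫₀^M s^a (1-s)^{-b} p(s)^{-2} ds, with p decreasing, p(1)=0, and lim_{M→1} -(1-M)^{1+κ} p'(M)/p(M) = c > 0). Then there exists a constant C₂ > 0 such that lim_{M→1} log(q(M)/p(M)) / (1-M)^{-κ} = C₂. -/
open Real Set Filter

lemma aux_sub_le_sub (f g f' g' : ℝ → ℝ) {x y : ℝ} (hxy : x ≤ y)
    (hfc : ContinuousOn f (Icc x y)) (hgc : ContinuousOn g (Icc x y))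
    (hf : ∀ t ∈ Ioo x y, HasDerivAt f (f' t) t)
    (hg : ∀ t ∈ Ioo x y, HasDerivAt g (g' t) t)
    (hle : ∀ t ∈ Ioo x y, f' t ≤ g' t) : f y - f x ≤ g y - g x := by
  rcases eq_or_lt_of_le hxy with rfl | hlt
  · simp
  have hmono : MonotoneOn (fun t => g t - f t) (Icc x y) := by
    apply monotoneOn_of_deriv_nonneg (convex_Icc x y) (hgc.sub hfc)
    · intro t ht
      rw [interior_Icc] at ht
      exact ((hg t ht).sub (hf t ht)).differentiableAt.differentiableWithinAt
    · intro t ht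
      rw [interior_Icc] at ht
      rw [((hg t ht).sub (hf t ht)).deriv]
      linarith [hle t ht]
  have := hmono (left_mem_Icc.2 hxy) (right_mem_Icc.2 hxy) hxy
  simp only at this
  linarith

lemma aux_rpow_deriv (κ : ℝ) {t : ℝ} (ht : t < 1) :
    HasDerivAt (fun s : ℝ => (1 - s) ^ (-κ)) (κ * (1 - t) ^ (-κ - 1)) t := by
  have h0 : (0:ℝ) < 1 - t := by linarith
  have h1 : HasDerivAt (fun s : ℝ => 1 - s) (-1) t := by
    simpa using (hasDerivAt_id t).const_sub 1
  have h2 := h1.rpow_const (p := -κ) (Or.inl h0.ne')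
  convert h2 using 1
  ring

/-- Upper bound for `log ∘ p` increments from a lower bound on `-(1-t)^(1+κ) p'/p`. -/
lemma aux_logp_le (p p' : ℝ → ℝ) (κ : ℝ) (hκ : 0 < κ)
    (hpos : ∀ M ∈ Ico (0:ℝ) 1, 0 < p M)
    (hderiv : ∀ M ∈ Ico (0:ℝ) 1, HasDerivAt p (p' M) M)
    (lam : ℝ) {x y : ℝ} (hx : 0 ≤ x) (hxy : x ≤ y) (hy : y < 1)
    (hineq : ∀ t ∈ Ioo x y, p' t / p t ≤ -lam * (1 - t) ^ (-κ - 1)) :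
    log (p y) - log (p x) ≤ (lam / κ) * ((1 - x) ^ (-κ) - (1 - y) ^ (-κ)) := by
  have hsub : Icc x y ⊆ Ico (0:ℝ) 1 := fun t ht => ⟨le_trans hx ht.1, lt_of_le_of_lt ht.2 hy⟩
  have key := aux_sub_le_sub (fun t => log (p t)) (fun t => -(lam / κ) * (1 - t) ^ (-κ))
      (fun t => p' t / p t) (fun t => -lam * (1 - t) ^ (-κ - 1)) hxy
    ?_ ?_ ?_ ?_ hineq
  · have : -(lam / κ) * (1 - y) ^ (-κ) - -(lam / κ) * (1 - x) ^ (-κ)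
        = (lam / κ) * ((1 - x) ^ (-κ) - (1 - y) ^ (-κ)) := by ring
    linarith [key, this.symm.le]
  · intro t ht
    exact ((hderiv t (hsub ht)).continuousAt.continuousWithinAt).log
      (ne_of_gt (hpos t (hsub ht)))
  · apply ContinuousOn.mul continuousOn_const
    apply ContinuousOn.rpow_const (continuousOn_const.sub continuousOn_id)
    intro t ht
    left
    have : t < 1 := lt_of_le_of_lt ht.2 hy
    intro h; simp only [Pi.sub_apply, id_eq, sub_eq_zero] at h; linarith
  · intro t ht
    exact (hderiv t (hsub (Ioo_subset_Icc_self ht))).log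
      (ne_of_gt (hpos t (hsub (Ioo_subset_Icc_self ht))))
  · intro t ht
    have h := (aux_rpow_deriv κ (lt_of_lt_of_le ht.2 hy.le)).const_mul (-(lam / κ))
    refine h.congr_deriv ?_
    rw [← mul_assoc, neg_mul, div_mul_cancel₀ lam hκ.ne', neg_mul]

/-- Lower bound version. -/
lemma aux_logp_ge (p p' : ℝ → ℝ) (κ : ℝ) (hκ : 0 < κ)
    (hpos : ∀ M ∈ Ico (0:ℝ) 1, 0 < p M)
    (hderiv : ∀ M ∈ Ico (0:ℝ) 1, HasDerivAt p (p' M) M)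
    (lam : ℝ) {x y : ℝ} (hx : 0 ≤ x) (hxy : x ≤ y) (hy : y < 1)
    (hineq : ∀ t ∈ Ioo x y, -lam * (1 - t) ^ (-κ - 1) ≤ p' t / p t) :
    (lam / κ) * ((1 - x) ^ (-κ) - (1 - y) ^ (-κ)) ≤ log (p y) - log (p x) := by
  have hsub : Icc x y ⊆ Ico (0:ℝ) 1 := fun t ht => ⟨le_trans hx ht.1, lt_of_le_of_lt ht.2 hy⟩
  have key := aux_sub_le_sub (fun t => -(lam / κ) * (1 - t) ^ (-κ)) (fun t => log (p t))
      (fun t => -lam * (1 - t) ^ (-κ - 1)) (fun t => p' t / p t) hxy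
    ?_ ?_ ?_ ?_ hineq
  · have : -(lam / κ) * (1 - y) ^ (-κ) - -(lam / κ) * (1 - x) ^ (-κ)
        = (lam / κ) * ((1 - x) ^ (-κ) - (1 - y) ^ (-κ)) := by ring
    linarith [key, this.symm.le]
  · apply ContinuousOn.mul continuousOn_const
    apply ContinuousOn.rpow_const (continuousOn_const.sub continuousOn_id)
    intro t ht
    left
    have : t < 1 := lt_of_le_of_lt ht.2 hy
    intro h; simp only [Pi.sub_apply, id_eq, sub_eq_zero] at h; linarith
  · intro t ht
    exact ((hderiv t (hsub ht)).continuousAt.continuousWithinAt).log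
      (ne_of_gt (hpos t (hsub ht)))
  · intro t ht
    have h := (aux_rpow_deriv κ (lt_of_lt_of_le ht.2 hy.le)).const_mul (-(lam / κ))
    refine h.congr_deriv ?_
    rw [← mul_assoc, neg_mul, div_mul_cancel₀ lam hκ.ne', neg_mul]
  · intro t ht
    exact (hderiv t (hsub (Ioo_subset_Icc_self ht))).log
      (ne_of_gt (hpos t (hsub (Ioo_subset_Icc_self ht))))

lemma aux_div_lower (Y pd pp C : ℝ) (hY : 0 < Y) (hp : 0 < pp) (h : -Y * pd / pp < C) :
    -C * Y⁻¹ ≤ pd / pp := by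
  rw [div_lt_iff₀ hp] at h
  rw [le_div_iff₀ hp]
  have h1 : -C * Y⁻¹ * pp = (-C * pp) / Y := by field_simp
  rw [h1, div_le_iff₀ hY]
  nlinarith

lemma aux_div_upper (Y pd pp C : ℝ) (hY : 0 < Y) (hp : 0 < pp) (h : C < -Y * pd / pp) :
    pd / pp ≤ -C * Y⁻¹ := by
  rw [lt_div_iff₀ hp] at h
  rw [div_le_iff₀ hp]
  have h1 : -C * Y⁻¹ * pp = (-C * pp) / Y := by field_simp
  rw [h1, le_div_iff₀ hY]
  nlinarith

lemma aux_tendsto_onesub : Tendsto (fun M : ℝ => 1 - M) (nhdsWithin 1 (Iio 1)) (nhdsWithin 0 (Ioi 0)) := by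
  apply tendsto_nhdsWithin_of_tendsto_nhds_of_eventually_within
  · have h : Tendsto (fun M : ℝ => 1 - M) (nhds 1) (nhds (1 - 1)) :=
      (continuous_const.sub continuous_id).tendsto 1
    simpa using h.mono_left nhdsWithin_le_nhds
  · filter_upwards [self_mem_nhdsWithin] with M hM
    simp only [mem_Iio] at hM
    simp only [mem_Ioi]
    linarith

lemma aux_tendsto_rpow (κ : ℝ) (hκ : 0 < κ) :
    Tendsto (fun M : ℝ => (1 - M) ^ κ) (nhdsWithin 1 (Iio 1)) (nhds 0) := by
  have h1 : Tendsto (fun x : ℝ => x ^ κ) (nhdsWithin 0 (Ioi 0)) (nhds 0) := by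
    have := (Real.continuousAt_rpow_const 0 κ (Or.inr hκ.le)).tendsto
    rw [Real.zero_rpow hκ.ne'] at this
    exact this.mono_left nhdsWithin_le_nhds
  exact h1.comp aux_tendsto_onesub

lemma aux_tendsto_rpow_log (κ : ℝ) (hκ : 0 < κ) :
    Tendsto (fun M : ℝ => (1 - M) ^ κ * Real.log (1 - M)) (nhdsWithin 1 (Iio 1)) (nhds 0) := by
  have h1 := (tendsto_log_mul_rpow_nhdsGT_zero hκ).comp aux_tendsto_onesub
  simpa [Function.comp_def, mul_comm] using h1

lemma stepA (κ c : ℝ) (hκ : 0 < κ) (hc : 0 < c) (p p' : ℝ → ℝ)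
    (hpos : ∀ M ∈ Ico (0:ℝ) 1, 0 < p M)
    (hderiv : ∀ M ∈ Ico (0:ℝ) 1, HasDerivAt p (p' M) M)
    (hlim : Tendsto (fun M => -(1 - M) ^ (1 + κ) * p' M / p M)
      (nhdsWithin 1 (Iio 1)) (nhds c)) :
    Tendsto (fun M => (1 - M) ^ κ * Real.log (p M)) (nhdsWithin 1 (Iio 1)) (nhds (-(c/κ))) := by
  rw [Metric.tendsto_nhds]
  intro ε hε
  set η := κ * ε / 4 with hηdef
  have hηpos : 0 < η := by positivity
  have hη4 : η / κ = ε / 4 := by rw [hηdef]; field_simp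
  have hev := Metric.tendsto_nhds.mp hlim η hηpos
  obtain ⟨l, hl, hsub⟩ := mem_nhdsLT_iff_exists_Ioo_subset.mp hev
  simp only [mem_Iio] at hl
  set b := max l 0 with hbdef
  have hb0 : 0 ≤ b := le_max_right l 0
  have hb1 : b < 1 := max_lt hl one_pos
  have hrb : ∀ t ∈ Ioo b 1, dist (-(1 - t) ^ (1 + κ) * p' t / p t) c < η := by
    intro t ht
    exact hsub ⟨lt_of_le_of_lt (le_max_left l 0) ht.1, ht.2⟩
  have hptb : ∀ t ∈ Ioo b 1,
      -(c + η) * (1 - t) ^ (-κ - 1) ≤ p' t / p t ∧ p' t / p t ≤ -(c - η) * (1 - t) ^ (-κ - 1) := by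
    intro t ht
    have h1t : (0:ℝ) < 1 - t := by linarith [ht.2]
    have hY : (0:ℝ) < (1 - t) ^ (1 + κ) := rpow_pos_of_pos h1t _
    have hp : 0 < p t := hpos t ⟨le_trans hb0 ht.1.le, ht.2⟩
    have hd := hrb t ht
    rw [Real.dist_eq, abs_lt] at hd
    have hrw : (1 - t) ^ (-κ - 1) = ((1 - t) ^ (1 + κ))⁻¹ := by
      rw [show -κ - 1 = -(1 + κ) by ring, rpow_neg h1t.le]
    rw [hrw]
    exact ⟨aux_div_lower _ _ _ _ hY hp (by linarith),
      aux_div_upper _ _ _ _ hY hp (by linarith)⟩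
  set A := Real.log (p b) with hAdef
  set B := (1 - b) ^ (-κ) with hBdef
  set D := 1 + |A| + ((|c + η| + |c - η|)/κ) * |B| with hDdef
  have hD1 : (1:ℝ) ≤ D := by
    rw [hDdef]
    have : (0:ℝ) ≤ |A| + ((|c + η| + |c - η|)/κ) * |B| := by positivity
    linarith
  have hDpos : (0:ℝ) < D := lt_of_lt_of_le one_pos hD1
  have hwsmall := Metric.tendsto_nhds.mp (aux_tendsto_rpow κ hκ) ((ε/4)/D) (by positivity)
  filter_upwards [Ioo_mem_nhdsLT_of_mem (show (1:ℝ) ∈ Ioc b 1 from ⟨hb1, le_refl 1⟩),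
    hwsmall] with M hM hwM
  have hM1 : M < 1 := hM.2
  have h1M : (0:ℝ) < 1 - M := by linarith
  set w := (1 - M) ^ κ with hwdef
  have hw : 0 < w := rpow_pos_of_pos h1M κ
  have hwinv : w * (1 - M) ^ (-κ) = 1 := by
    rw [hwdef, rpow_neg h1M.le, mul_inv_cancel₀ (ne_of_gt (rpow_pos_of_pos h1M κ))]
  rw [Real.dist_eq] at hwM ⊢
  simp only [sub_zero] at hwM
  have hwD : |w| * D < ε/4 := by
    calc |w| * D < ((ε/4)/D) * D := mul_lt_mul_of_pos_right hwM hDpos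
    _ = ε/4 := div_mul_cancel₀ _ (ne_of_gt hDpos)
  have herr : ∀ σ : ℝ, |σ| ≤ |c + η| + |c - η| → |w * A + σ / κ * (w * B)| < ε/4 := by
    intro σ hσ
    calc |w * A + σ / κ * (w * B)| ≤ |w| * |A| + |σ| / κ * (|w| * |B|) := by
          refine (abs_add_le _ _).trans (le_of_eq ?_)
          rw [abs_mul, abs_mul, abs_mul, abs_div, abs_of_pos hκ]
          try ring
    _ ≤ |w| * |A| + (|c + η| + |c - η|) / κ * (|w| * |B|) := by gcongr
    _ = |w| * (|A| + ((|c + η| + |c - η|)/κ) * |B|) := by ring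
    _ ≤ |w| * D := by
        apply mul_le_mul_of_nonneg_left _ (abs_nonneg w)
        rw [hDdef]; linarith
    _ < ε/4 := hwD
  have hge := aux_logp_ge p p' κ hκ hpos hderiv (c + η) hb0 hM.1.le hM1
    (fun t ht => (hptb t ⟨ht.1, lt_trans ht.2 hM1⟩).1)
  have hle := aux_logp_le p p' κ hκ hpos hderiv (c - η) hb0 hM.1.le hM1
    (fun t ht => (hptb t ⟨ht.1, lt_trans ht.2 hM1⟩).2)
  have hge2 : w * Real.log (p M) ≥ w * A + ((c + η)/κ) * (w * B - 1) := by
    have h := mul_le_mul_of_nonneg_left hge hw.le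
    have hexp : w * ((c + η) / κ * ((1 - b) ^ (-κ) - (1 - M) ^ (-κ)))
        = ((c + η)/κ) * (w * B) - ((c + η)/κ) * (w * (1 - M) ^ (-κ)) := by rw [hBdef]; ring
    rw [hexp, hwinv] at h
    have hexp2 : w * (Real.log (p M) - Real.log (p b)) = w * Real.log (p M) - w * A := by
      rw [hAdef]; ring
    rw [hexp2] at h
    linarith
  have hle2 : w * Real.log (p M) ≤ w * A + ((c - η)/κ) * (w * B - 1) := by
    have h := mul_le_mul_of_nonneg_left hle hw.le
    have hexp : w * ((c - η) / κ * ((1 - b) ^ (-κ) - (1 - M) ^ (-κ)))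
        = ((c - η)/κ) * (w * B) - ((c - η)/κ) * (w * (1 - M) ^ (-κ)) := by rw [hBdef]; ring
    rw [hexp, hwinv] at h
    have hexp2 : w * (Real.log (p M) - Real.log (p b)) = w * Real.log (p M) - w * A := by
      rw [hAdef]; ring
    rw [hexp2] at h
    linarith
  rw [abs_lt]
  have hplus := herr (c + η) (le_add_of_nonneg_right (abs_nonneg _))
  have hminus := herr (c - η) (le_add_of_nonneg_left (abs_nonneg _))
  rw [abs_lt] at hplus hminus
  have hcη1 : (c + η)/κ = c/κ + ε/4 := by rw [← hη4]; ring
  have hcη2 : (c - η)/κ = c/κ - ε/4 := by rw [← hη4]; ring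
  constructor
  · have e1 : ((c + η)/κ) * (w * B - 1) = (c + η)/κ * (w * B) - ((c + η)/κ) := by ring
    linarith [hge2, e1, hcη1, hplus.1]
  · have e1 : ((c - η)/κ) * (w * B - 1) = (c - η)/κ * (w * B) - ((c - η)/κ) := by ring
    linarith [hle2, e1, hcη2, hminus.2]

theorem stmt_2 (a b κ c : ℝ) (ha : 1 < a) (hb : 1 < b) (hκ : 0 < κ) (hc : 0 < c)
    (p p' q : ℝ → ℝ)
    (hcont : ContinuousOn p (Set.Icc 0 1))
    (hpos : ∀ M ∈ Set.Ico (0:ℝ) 1, 0 < p M)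
    (hderiv : ∀ M ∈ Set.Ico (0:ℝ) 1, HasDerivAt p (p' M) M)
    (hdec : StrictAntiOn p (Set.Icc 0 1))
    (hp1 : p 1 = 0)
    (hlim : Tendsto (fun M => -(1 - M) ^ (1 + κ) * p' M / p M)
      (nhdsWithin 1 (Set.Iio 1)) (nhds c))
    (hq : ∀ M ∈ Set.Ioo (0:ℝ) 1,
      q M = (p M / M) * ∫ s in (0:ℝ)..M, s ^ a * (1 - s) ^ (-b) * (p s) ^ (-(2:ℝ))) :
    ∃ C₂ > 0, Tendsto (fun M => Real.log (q M / p M) / (1 - M) ^ (-κ))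
      (nhdsWithin 1 (Set.Iio 1)) (nhds C₂) := by
  set g : ℝ → ℝ := fun s => s ^ a * (1 - s) ^ (-b) * (p s) ^ (-(2:ℝ)) with hgdef
  set I : ℝ → ℝ := fun M => ∫ s in (0:ℝ)..M, g s with hIdef
  set P : ℝ → ℝ := fun s => (p s) ^ (-(2:ℝ)) with hPdef
  have hPpos : ∀ s ∈ Ico (0:ℝ) 1, 0 < P s := fun s hs => rpow_pos_of_pos (hpos s hs) _
  have hgpos : ∀ s ∈ Ioo (0:ℝ) 1, 0 < g s := by
    intro s hs
    have h1 : 0 < s ^ a := rpow_pos_of_pos hs.1 _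
    have h2 : 0 < (1 - s) ^ (-b) := rpow_pos_of_pos (by linarith [hs.2]) _
    have h3 : 0 < (p s) ^ (-(2:ℝ)) := rpow_pos_of_pos (hpos s ⟨hs.1.le, hs.2⟩) _
    rw [hgdef]
    positivity
  have hgcont : ContinuousOn g (Ico (0:ℝ) 1) := by
    rw [hgdef]
    apply ContinuousOn.mul
    apply ContinuousOn.mul
    · exact continuousOn_id.rpow_const (fun s hs => Or.inr (by linarith))
    · apply ContinuousOn.rpow_const (continuousOn_const.sub continuousOn_id)
      intro s hs
      left
      intro h; simp only [Pi.sub_apply, id_eq, sub_eq_zero] at h; exact absurd hs.2 (by rw [← h]; simp)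
    · exact (hcont.mono Ico_subset_Icc_self).rpow_const
        (fun s hs => Or.inl (ne_of_gt (hpos s hs)))
  have hgint : ∀ M ∈ Ico (0:ℝ) 1, IntervalIntegrable g MeasureTheory.volume 0 M := by
    intro M hM
    apply ContinuousOn.intervalIntegrable
    rw [uIcc_of_le hM.1]
    exact hgcont.mono (fun t ht => ⟨ht.1, lt_of_le_of_lt ht.2 hM.2⟩)
  have hIderiv : ∀ M ∈ Ioo (0:ℝ) 1, HasDerivAt I (g M) M := by
    intro M hM
    rw [hIdef]
    apply intervalIntegral.integral_hasDerivAt_right (hgint M ⟨hM.1.le, hM.2⟩)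
    · exact (hgcont.mono Ioo_subset_Ico_self).stronglyMeasurableAtFilter isOpen_Ioo M hM
    · exact hgcont.continuousAt (mem_of_superset (isOpen_Ioo.mem_nhds hM) Ioo_subset_Ico_self)
  have hIpos : ∀ M ∈ Ioo (0:ℝ) 1, 0 < I M := by
    intro M hM
    rw [hIdef]
    exact intervalIntegral.intervalIntegral_pos_of_pos_on (hgint M ⟨hM.1.le, hM.2⟩)
      (fun x hx => hgpos x ⟨hx.1, lt_trans hx.2 hM.2⟩) hM.1
  have hPderiv : ∀ s ∈ Ico (0:ℝ) 1, HasDerivAt P (p' s * (-2) * p s ^ (-(2:ℝ) - 1)) s := by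
    intro s hs
    rw [hPdef]
    exact (hderiv s hs).rpow_const (Or.inl (ne_of_gt (hpos s hs)))
  -- extract m₀
  have hev : ∀ᶠ M in nhdsWithin 1 (Iio 1),
      -(1 - M) ^ (1 + κ) * p' M / p M ∈ Ioo (c/2) (2*c) :=
    hlim.eventually (Ioo_mem_nhds (by linarith) (by linarith))
  obtain ⟨l, hl, hsubl⟩ := mem_nhdsLT_iff_exists_Ioo_subset.mp hev
  simp only [mem_Iio] at hl
  set m₀ := max l (1/2) with hm₀def
  have hm₀half : (1/2 : ℝ) ≤ m₀ := le_max_right _ _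
  have hm₀0 : (0:ℝ) ≤ m₀ := by linarith
  have hm₀1 : m₀ < 1 := max_lt hl (by norm_num)
  have hm₀mem : m₀ ∈ Ico (0:ℝ) 1 := ⟨hm₀0, hm₀1⟩
  have hm₀Ioo : m₀ ∈ Ioo (0:ℝ) 1 := ⟨by linarith, hm₀1⟩
  have hrB : ∀ t ∈ Ioo m₀ 1, c/2 < -(1 - t) ^ (1 + κ) * p' t / p t
      ∧ -(1 - t) ^ (1 + κ) * p' t / p t < 2*c := by
    intro t ht
    exact hsubl ⟨lt_of_le_of_lt (le_max_left _ _) ht.1, ht.2⟩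
  -- constants
  set e : ℝ := 1 + κ - b with hedef
  set d : ℝ := |e| with hddef
  have hd0 : 0 ≤ d := abs_nonneg e
  set K₁ : ℝ := (2:ℝ)^(-a) / (4*c) with hK₁def
  set K₂ : ℝ := 1/c with hK₂def
  have hK₁pos : 0 < K₁ := by rw [hK₁def]; positivity
  have hK₂pos : 0 < K₂ := by rw [hK₂def]; positivity
  -- key pointwise bound
  have hkey : ∀ M ∈ Ioo m₀ 1, ∀ t ∈ Ioo m₀ M,
      K₁ * (1-M)^d * (p' t * (-2) * p t ^ (-(2:ℝ) - 1)) ≤ g t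
      ∧ g t ≤ K₂ * (1-M)^(-d) * (p' t * (-2) * p t ^ (-(2:ℝ) - 1)) := by
    intro M hM t ht
    have htm : t ∈ Ioo m₀ 1 := ⟨ht.1, lt_trans ht.2 hM.2⟩
    have hx : 0 < p t := hpos t ⟨le_trans hm₀0 ht.1.le, htm.2⟩
    have hy : 0 < 1 - t := by linarith [htm.2]
    have hy1 : 1 - t ≤ 1 := by linarith [lt_of_le_of_lt hm₀half htm.1]
    have h1M : (0:ℝ) < 1 - M := by linarith [hM.2]
    have h1M1 : 1 - M ≤ 1 := by linarith [lt_of_le_of_lt hm₀half hM.1]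
    have hyM : 1 - M ≤ 1 - t := by linarith [ht.2]
    have hR := hrB t htm
    set R := -(1 - t) ^ (1 + κ) * p' t / p t with hRdef
    have hYpos : 0 < (1 - t) ^ (1 + κ) := rpow_pos_of_pos hy _
    have hp'eq : p' t = -R * p t / (1 - t) ^ (1 + κ) := by
      rw [hRdef]; field_simp
    have hxx : p t * p t ^ (-(2:ℝ) - 1) = p t ^ (-(2:ℝ)) := by
      nth_rewrite 1 [← Real.rpow_one (p t)]
      rw [← Real.rpow_add hx]
      norm_num
    have hPd : p' t * (-2) * p t ^ (-(2:ℝ) - 1)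
        = 2 * R * (((1 - t) ^ (1 + κ))⁻¹ * p t ^ (-(2:ℝ))) := by
      rw [← hxx, hp'eq]
      field_simp
    have hgexp : g t = (t ^ a * (1 - t) ^ e) * (((1 - t) ^ (1 + κ))⁻¹ * p t ^ (-(2:ℝ))) := by
      rw [hgdef]
      have hsplit : (1 - t) ^ (-b) = (1 - t) ^ e * ((1 - t) ^ (1 + κ))⁻¹ := by
        rw [← rpow_neg hy.le, ← rpow_add hy, show e + -(1 + κ) = -b by rw [hedef]; ring]
      simp only
      rw [hsplit]; ring
    set W := ((1 - t) ^ (1 + κ))⁻¹ * p t ^ (-(2:ℝ)) with hWdef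
    have hW : 0 < W := mul_pos (inv_pos.mpr hYpos) (rpow_pos_of_pos hx _)
    have hta : (2:ℝ)^(-a) ≤ t ^ a := by
      rw [rpow_neg (by norm_num : (0:ℝ) ≤ 2), ← Real.inv_rpow (by norm_num : (0:ℝ) ≤ 2)]
      exact rpow_le_rpow (by norm_num) (by rw [show ((2:ℝ))⁻¹ = 1/2 by norm_num]; linarith [htm.1]) (by linarith)
    have hta1 : t ^ a ≤ 1 :=
      rpow_le_one (by linarith [lt_of_le_of_lt hm₀half htm.1]) htm.2.le (by linarith)
    have hyed : (1-M)^d ≤ (1-t)^e := by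
      rcases le_or_gt 0 e with he | he
      · rw [show d = e from by rw [hddef]; exact abs_of_nonneg he]
        exact rpow_le_rpow h1M.le hyM he
      · calc (1-M)^d ≤ 1 := rpow_le_one h1M.le h1M1 hd0
          _ ≤ (1-t)^e := one_le_rpow_of_pos_of_le_one_of_nonpos hy hy1 he.le
    have hyed2 : (1-t)^e ≤ (1-M)^(-d) := by
      rcases le_or_gt 0 e with he | he
      · calc (1-t)^e ≤ 1 := rpow_le_one hy.le hy1 he
          _ ≤ (1-M)^(-d) := one_le_rpow_of_pos_of_le_one_of_nonpos h1M h1M1 (neg_nonpos.mpr hd0)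
      · rw [show -d = e from by rw [hddef, abs_of_neg he]; ring]
        exact rpow_le_rpow_of_nonpos h1M hyM he.le
    constructor
    · rw [hPd, hgexp]
      rw [show K₁ * (1-M)^d * (2 * R * W) = (K₁ * (1-M)^d * (2 * R)) * W from by ring]
      apply mul_le_mul_of_nonneg_right _ hW.le
      have hstep : K₁ * (1-M)^d * (2 * R) ≤ K₁ * (1-M)^d * (2 * (2*c)) := by
        have hnn : 0 ≤ K₁ * (1-M)^d := mul_nonneg hK₁pos.le (rpow_nonneg h1M.le d)
        have hfac : K₁ * (1-M)^d * (2 * (2*c)) - K₁ * (1-M)^d * (2 * R)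
            = (K₁ * (1-M)^d) * (2*(2*c) - 2*R) := by ring
        linarith [mul_nonneg hnn (by linarith [hR.2] : (0:ℝ) ≤ 2*(2*c) - 2*R), hfac]
      have heq : K₁ * (1-M)^d * (2 * (2*c)) = (2:ℝ)^(-a) * (1-M)^d := by
        rw [hK₁def]; field_simp; ring
      calc K₁ * (1-M)^d * (2 * R) ≤ (2:ℝ)^(-a) * (1-M)^d := by rw [← heq]; exact hstep
        _ ≤ t ^ a * (1-t)^e := mul_le_mul hta hyed (rpow_nonneg h1M.le d) (rpow_pos_of_pos (by linarith [lt_of_le_of_lt hm₀half htm.1]) a).le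
    · rw [hPd, hgexp]
      rw [show K₂ * (1-M)^(-d) * (2 * R * W) = (K₂ * (1-M)^(-d) * (2 * R)) * W from by ring]
      apply mul_le_mul_of_nonneg_right _ hW.le
      have h2R : 1 ≤ K₂ * (2 * R) := by
        rw [hK₂def]
        rw [show 1/c * (2*R) = (2*R)/c from by ring]
        rw [le_div_iff₀ hc]
        linarith [hR.1]
      calc t ^ a * (1-t)^e ≤ 1 * (1-M)^(-d) :=
            mul_le_mul hta1 hyed2 (rpow_nonneg hy.le e) (by norm_num)
        _ ≤ K₂ * (1-M)^(-d) * (2 * R) := by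
            rw [one_mul]
            have hprod := mul_nonneg (rpow_nonneg h1M.le (-d))
              (by linarith : (0:ℝ) ≤ K₂ * (2*R) - 1)
            have hfac : K₂ * (1-M)^(-d) * (2*R) - (1-M)^(-d)
                = (1-M)^(-d) * (K₂*(2*R) - 1) := by ring
            linarith [hprod, hfac]
  -- p tends to 0
  have hptend : Tendsto p (nhdsWithin 1 (Iio 1)) (nhds 0) := by
    rw [(nhdsWithin_Ioo_eq_nhdsLT one_pos).symm]
    have h := hcont 1 (right_mem_Icc.mpr zero_le_one)
    rw [ContinuousWithinAt, hp1] at h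
    exact h.mono_left (nhdsWithin_mono 1 Ioo_subset_Icc_self)
  have hpm₀pos : 0 < p m₀ := hpos m₀ hm₀mem
  have hpsmall : ∀ᶠ M in nhdsWithin 1 (Iio 1), p M < p m₀ / 2 :=
    hptend.eventually_lt_const (by positivity)
  set C₃ : ℝ := I m₀ / P m₀ with hC₃def
  have hIm₀pos : 0 < I m₀ := hIpos m₀ hm₀Ioo
  have hPm₀pos : 0 < P m₀ := hPpos m₀ hm₀mem
  have hC₃pos : 0 < C₃ := by rw [hC₃def]; positivity
  -- the two-sided eventual bound on log (I M / P M)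
  have hbound : ∀ᶠ M in nhdsWithin 1 (Iio 1),
      Real.log (K₁/2) + d * Real.log (1-M) ≤ Real.log (I M / P M)
      ∧ Real.log (I M / P M) ≤ Real.log (C₃ + K₂) + (-d) * Real.log (1-M) := by
    filter_upwards [Ioo_mem_nhdsLT_of_mem (show (1:ℝ) ∈ Ioc m₀ 1 from ⟨hm₀1, le_refl 1⟩),
      hpsmall] with M hM hpM
    have hM01 : M ∈ Ioo (0:ℝ) 1 := ⟨by linarith [lt_of_le_of_lt hm₀half hM.1], hM.2⟩
    have h1M : (0:ℝ) < 1 - M := by linarith [hM.2]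
    have h1M1 : 1 - M ≤ 1 := by linarith [hM01.1]
    have hPM : 0 < P M := hPpos M ⟨hM01.1.le, hM01.2⟩
    have hIM : 0 < I M := hIpos M hM01
    have hpMpos : 0 < p M := hpos M ⟨hM01.1.le, hM01.2⟩
    have hIccsub : Icc m₀ M ⊆ Ico (0:ℝ) 1 :=
      fun t ht => ⟨le_trans hm₀0 ht.1, lt_of_le_of_lt ht.2 hM01.2⟩
    have hIccsub2 : Icc m₀ M ⊆ Ioo (0:ℝ) 1 :=
      fun t ht => ⟨lt_of_lt_of_le (by norm_num : (0:ℝ) < 1/2) (le_trans hm₀half ht.1),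
        lt_of_le_of_lt ht.2 hM01.2⟩
    have hIoosub : Ioo m₀ M ⊆ Ioo (0:ℝ) 1 :=
      fun t ht => hIccsub2 (Ioo_subset_Icc_self ht)
    have hIcont : ContinuousOn I (Icc m₀ M) :=
      fun t ht => (hIderiv t (hIccsub2 ht)).continuousAt.continuousWithinAt
    have hPcont : ContinuousOn P (Icc m₀ M) := by
      rw [hPdef]
      exact (hcont.mono (hIccsub.trans Ico_subset_Icc_self)).rpow_const
        (fun t ht => Or.inl (ne_of_gt (hpos t (hIccsub ht))))
    have hlow := aux_sub_le_sub (fun t => K₁ * (1-M)^d * P t) I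
        (fun t => K₁ * (1-M)^d * (p' t * (-2) * p t ^ (-(2:ℝ) - 1))) g hM.1.le
        (continuousOn_const.mul hPcont) hIcont
        (fun t ht => (hPderiv t (hIccsub (Ioo_subset_Icc_self ht))).const_mul _)
        (fun t ht => hIderiv t (hIoosub ht))
        (fun t ht => (hkey M hM t ht).1)
    have hhigh := aux_sub_le_sub I (fun t => K₂ * (1-M)^(-d) * P t) g
        (fun t => K₂ * (1-M)^(-d) * (p' t * (-2) * p t ^ (-(2:ℝ) - 1))) hM.1.le
        hIcont (continuousOn_const.mul hPcont)
        (fun t ht => hIderiv t (hIoosub ht))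
        (fun t ht => (hPderiv t (hIccsub (Ioo_subset_Icc_self ht))).const_mul _)
        (fun t ht => (hkey M hM t ht).2)
    have hPMm₀ : P m₀ ≤ P M := by
      rw [hPdef]
      exact rpow_le_rpow_of_nonpos hpMpos
        (hdec (Icc_subset_Icc (by norm_num) (le_refl 1) ⟨hm₀0, hm₀1.le⟩)
          ⟨hM01.1.le, hM01.2.le⟩ hM.1).le (by norm_num)
    have h2P : 2 * P m₀ ≤ P M := by
      have h4 : (p m₀/2) ^ (-(2:ℝ)) ≤ (p M) ^ (-(2:ℝ)) :=
        rpow_le_rpow_of_nonpos hpMpos hpM.le (by norm_num)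
      have h6 : (2:ℝ) ^ (-(2:ℝ)) = 1/4 := by
        rw [show (-(2:ℝ)) = ((-2:ℤ):ℝ) by norm_num, Real.rpow_intCast]
        norm_num
      have hPm₀r : P m₀ = p m₀ ^ (-(2:ℝ)) := rfl
      have h5 : (p m₀/2) ^ (-(2:ℝ)) = 4 * P m₀ := by
        rw [hPm₀r, Real.div_rpow hpm₀pos.le (by norm_num : (0:ℝ) ≤ 2), h6]
        ring
      rw [h5] at h4
      have hPMr : P M = p M ^ (-(2:ℝ)) := rfl
      rw [hPMr]
      linarith [h4, hPm₀pos]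
    have hJlow : (K₁/2) * (1-M)^d ≤ I M / P M := by
      rw [le_div_iff₀ hPM]
      have hprod := mul_nonneg (mul_nonneg hK₁pos.le (rpow_nonneg h1M.le d))
        (by linarith : (0:ℝ) ≤ P M - 2 * P m₀)
      have hfac : K₁*(1-M)^d*(P M) - K₁*(1-M)^d*(P m₀) - (K₁/2*(1-M)^d*(P M))
          = (K₁*(1-M)^d)*(P M - 2*(P m₀)) / 2 := by ring
      linarith [hlow, hIm₀pos, hfac, hprod]
    have hJhigh : I M / P M ≤ (C₃ + K₂) * (1-M)^(-d) := by
      rw [div_le_iff₀ hPM]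
      have hd1 : 1 ≤ (1-M)^(-d) :=
        one_le_rpow_of_pos_of_le_one_of_nonpos h1M h1M1 (neg_nonpos.mpr hd0)
      have hIm₀eq : I m₀ = C₃ * P m₀ := by rw [hC₃def]; field_simp
      have h7 : P M ≤ (1-M)^(-d) * P M := le_mul_of_one_le_left hPM.le hd1
      have h8 : C₃ * P m₀ ≤ C₃ * ((1-M)^(-d) * P M) :=
        mul_le_mul_of_nonneg_left (le_trans hPMm₀ h7) hC₃pos.le
      have h9 : 0 ≤ K₂ * (1-M)^(-d) * P m₀ :=
        mul_nonneg (mul_nonneg hK₂pos.le (rpow_nonneg h1M.le _)) hPm₀pos.le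
      have hfac : (C₃ + K₂) * (1-M)^(-d) * P M
          = C₃ * ((1-M)^(-d) * P M) + K₂ * (1-M)^(-d) * P M := by ring
      linarith [hhigh, hIm₀eq, h8, h9, hfac]
    constructor
    · have hlog := Real.log_le_log
        (mul_pos (half_pos hK₁pos) (rpow_pos_of_pos h1M d)) hJlow
      rwa [Real.log_mul (ne_of_gt (half_pos hK₁pos))
        (ne_of_gt (rpow_pos_of_pos h1M d)), Real.log_rpow h1M] at hlog
    · have hlog := Real.log_le_log (div_pos hIM hPM) hJhigh
      rwa [Real.log_mul (ne_of_gt (by positivity : (0:ℝ) < C₃ + K₂))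
        (ne_of_gt (rpow_pos_of_pos h1M (-d))), Real.log_rpow h1M] at hlog
  -- step B
  have hB : Tendsto (fun M => (1-M)^κ * Real.log (I M / P M)) (nhdsWithin 1 (Iio 1)) (nhds 0) := by
    have hlo : Tendsto (fun M : ℝ => (1-M)^κ * Real.log (K₁/2) + d * ((1-M)^κ * Real.log (1-M)))
        (nhdsWithin 1 (Iio 1)) (nhds 0) := by
      have h1 := (aux_tendsto_rpow κ hκ).mul_const (Real.log (K₁/2))
      have h2 := (aux_tendsto_rpow_log κ hκ).const_mul d
      have h3 := h1.add h2
      norm_num at h3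
      convert h3 using 2 <;> norm_num
    have hhi : Tendsto (fun M : ℝ => (1-M)^κ * Real.log (C₃ + K₂) - d * ((1-M)^κ * Real.log (1-M)))
        (nhdsWithin 1 (Iio 1)) (nhds 0) := by
      have h1 := (aux_tendsto_rpow κ hκ).mul_const (Real.log (C₃ + K₂))
      have h2 := (aux_tendsto_rpow_log κ hκ).const_mul d
      have h3 := h1.sub h2
      norm_num at h3
      convert h3 using 2 <;> norm_num
    apply tendsto_of_tendsto_of_tendsto_of_le_of_le' hlo hhi
    · filter_upwards [hbound, Ioo_mem_nhdsLT_of_mem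
        (show (1:ℝ) ∈ Ioc m₀ 1 from ⟨hm₀1, le_refl 1⟩)] with M hMb hM
      have h1M : (0:ℝ) ≤ 1 - M := by linarith [hM.2]
      have hmul := mul_le_mul_of_nonneg_left hMb.1 (rpow_nonneg h1M κ)
      have hfac : (1-M)^κ * (Real.log (K₁/2) + d * Real.log (1-M))
          = (1-M)^κ * Real.log (K₁/2) + d * ((1-M)^κ * Real.log (1-M)) := by ring
      linarith [hmul, hfac]
    · filter_upwards [hbound, Ioo_mem_nhdsLT_of_mem
        (show (1:ℝ) ∈ Ioc m₀ 1 from ⟨hm₀1, le_refl 1⟩)] with M hMb hM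
      have h1M : (0:ℝ) ≤ 1 - M := by linarith [hM.2]
      have hmul := mul_le_mul_of_nonneg_left hMb.2 (rpow_nonneg h1M κ)
      have hfac : (1-M)^κ * (Real.log (C₃ + K₂) + (-d) * Real.log (1-M))
          = (1-M)^κ * Real.log (C₃ + K₂) - d * ((1-M)^κ * Real.log (1-M)) := by ring
      linarith [hmul, hfac]
  -- step C
  have hC : Tendsto (fun M : ℝ => (1-M)^κ * Real.log M) (nhdsWithin 1 (Iio 1)) (nhds 0) := by
    have hlogM : Tendsto (fun M : ℝ => Real.log M) (nhdsWithin 1 (Iio 1)) (nhds 0) := by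
      have h := (Real.continuousAt_log one_ne_zero).tendsto.mono_left
        (nhdsWithin_le_nhds (s := Iio (1:ℝ)))
      simpa using h
    have h := (aux_tendsto_rpow κ hκ).mul hlogM
    simpa using h
  have hA := stepA κ c hκ hc p p' hpos hderiv hlim
  refine ⟨2*c/κ, by positivity, ?_⟩
  have hsum := (hB.add (hA.const_mul (-2:ℝ))).add (hC.const_mul (-1:ℝ))
  have hsum2 : Tendsto (fun M => (1-M)^κ * Real.log (I M / P M)
      + (-2:ℝ) * ((1-M)^κ * Real.log (p M)) + (-1:ℝ) * ((1-M)^κ * Real.log M))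
      (nhdsWithin 1 (Iio 1)) (nhds (2*c/κ)) := by
    convert hsum using 2
    field_simp
    ring
  apply hsum2.congr'
  filter_upwards [Ioo_mem_nhdsLT_of_mem (show (1:ℝ) ∈ Ioc 0 1 from ⟨one_pos, le_refl 1⟩)]
    with M hM
  have h1M : (0:ℝ) < 1 - M := by linarith [hM.2]
  have hM0 : 0 < M := hM.1
  have hpM : 0 < p M := hpos M ⟨hM0.le, hM.2⟩
  have hPM : 0 < P M := hPpos M ⟨hM0.le, hM.2⟩
  have hIM : 0 < I M := hIpos M hM
  rw [hq M hM]
  have hqp : p M / M * I M / p M = I M / M := by field_simp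
  rw [hqp, Real.log_div (ne_of_gt hIM) (ne_of_gt hM0)]
  have hlogP : Real.log (P M) = (-(2:ℝ)) * Real.log (p M) := by
    rw [hPdef]; exact Real.log_rpow hpM _
  have hIsplit : Real.log (I M) = Real.log (I M / P M) + (-2:ℝ) * Real.log (p M) := by
    rw [Real.log_div (ne_of_gt hIM) (ne_of_gt hPM), hlogP]; ring
  rw [rpow_neg h1M.le, hIsplit]
  have hne : ((1-M)^κ) ≠ 0 := ne_of_gt (rpow_pos_of_pos h1M κ)
  field_simp
  ring
end

section
/- Let n ≥ 1 and let u ∈ 𝒟 = {u ∈ (0,∞)ⁿ : Σᵢ uᵢ < 1}, with M = Σᵢ uᵢ. For any positive continuous function g : (0,1) → (0,∞), the n×n matrix 𝓗 with entries 𝓗ᵢⱼ = δᵢⱼ/uᵢ − 1/M + g(M) is symmetric and positive definite. -/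
open Real Set

theorem stmt_4 (n : ℕ) (hn : 1 ≤ n) (u : Fin n → ℝ) (hu : ∀ i, 0 < u i)
    (hM : ∑ i, u i < 1) (g : ℝ → ℝ)
    (hgcont : ContinuousOn g (Set.Ioo 0 1))
    (hgpos : ∀ x ∈ Set.Ioo (0:ℝ) 1, 0 < g x) :
    (Matrix.of fun i j : Fin n =>
      (if i = j then 1 / u i else 0) - 1 / (∑ k, u k) + g (∑ k, u k)).PosDef := by
  set M : ℝ := ∑ k, u k with hMdef
  have hMpos : 0 < M := by
    exact Finset.sum_pos (fun i _ => hu i) ⟨⟨0, by omega⟩, Finset.mem_univ _⟩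
  have hgM : 0 < g M := hgpos M ⟨hMpos, hM⟩
  rw [Matrix.posDef_iff_dotProduct_mulVec]
  constructor
  · -- Hermitian
    ext i j
    simp only [Matrix.conjTranspose_apply, Matrix.of_apply, star_trivial]
    rcases eq_or_ne i j with h | h
    · subst h; rfl
    · simp [h, Ne.symm h]
  · intro x hx
    set S : ℝ := ∑ i, x i with hSdef
    have key : dotProduct (star x) (Matrix.mulVec (Matrix.of fun i j : Fin n =>
        (if i = j then 1 / u i else 0) - 1 / M + g M) x)
        = (∑ i, x i ^ 2 / u i) - S ^ 2 / M + g M * S ^ 2 := by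
      simp only [dotProduct, Matrix.mulVec, dotProduct, Matrix.of_apply,
        star_trivial, Pi.star_apply]
      have : ∀ i, (∑ j, ((if i = j then 1 / u i else 0) - 1 / M + g M) * x j)
          = x i / u i - S / M + g M * S := by
        intro i
        simp only [sub_mul, add_mul, Finset.sum_add_distrib, Finset.sum_sub_distrib]
        congr 1
        · congr 1
          · rw [Finset.sum_eq_single i]
            · simp [div_eq_mul_inv, mul_comm]
            · intro j _ hj; simp [Ne.symm hj]
            · intro h; exact absurd (Finset.mem_univ i) h
          · rw [← Finset.mul_sum, ← hSdef]
            ring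
        · rw [← Finset.mul_sum, ← hSdef]
      rw [Finset.sum_congr rfl (fun i _ => by rw [this i])]
      simp only [mul_sub, mul_add, Finset.sum_add_distrib, Finset.sum_sub_distrib]
      congr 1
      · congr 1
        · exact Finset.sum_congr rfl fun i _ => by ring
        · rw [← Finset.sum_mul, ← hSdef]; ring
      · rw [← Finset.sum_mul, ← hSdef]; ring
    rw [key]
    -- Cauchy-Schwarz: S^2 ≤ M * ∑ x i ^2 / u i
    have cs : S ^ 2 ≤ M * ∑ i, x i ^ 2 / u i := by
      have h1 : S = ∑ i, Real.sqrt (u i) * (x i / Real.sqrt (u i)) := by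
        refine Finset.sum_congr rfl fun i _ => ?_
        rw [mul_div_cancel₀]
        exact (Real.sqrt_pos.2 (hu i)).ne'
      have h2 := Finset.sum_mul_sq_le_sq_mul_sq Finset.univ
        (fun i => Real.sqrt (u i)) (fun i => x i / Real.sqrt (u i))
      calc S ^ 2 = (∑ i, Real.sqrt (u i) * (x i / Real.sqrt (u i))) ^ 2 := by rw [h1]
        _ ≤ (∑ i, Real.sqrt (u i) ^ 2) * ∑ i, (x i / Real.sqrt (u i)) ^ 2 := h2
        _ = M * ∑ i, x i ^ 2 / u i := by
            congr 1
            · exact Finset.sum_congr rfl fun i _ => Real.sq_sqrt (hu i).le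
            · refine Finset.sum_congr rfl fun i _ => ?_
              rw [div_pow, Real.sq_sqrt (hu i).le]
    have hquad_nonneg : 0 ≤ (∑ i, x i ^ 2 / u i) - S ^ 2 / M := by
      rw [sub_nonneg, div_le_iff₀ hMpos, mul_comm]
      exact cs
    rcases eq_or_ne S 0 with hS | hS
    · -- S = 0, need ∑ x^2/u > 0
      have hxne : ∃ i, x i ≠ 0 := by
        by_contra h
        push_neg at h
        exact hx (funext h)
      obtain ⟨i, hi⟩ := hxne
      have hpos : 0 < ∑ i, x i ^ 2 / u i := by
        refine Finset.sum_pos' (fun j _ => div_nonneg (sq_nonneg _) (hu j).le) ⟨i, Finset.mem_univ i, ?_⟩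
        have h2 : 0 < x i ^ 2 := by positivity
        exact div_pos h2 (hu i)
      rw [hS]
      simpa using hpos
    · have : 0 < g M * S ^ 2 := by positivity
      linarith
end

section
/- Let a, b > 1, κ > 0, and let p, q satisfy the standing biofilm model assumptions. Define f(M) = √(q(M)/p(M)). Then for all 0 < M < 1 one has 2 f'(M)/f(M) = M^a (1-M)^{-b} p(M)^{-2} / ∫₀^M s^a (1-s)^{-b} p(s)^{-2} ds − 1/M ≥ a/M; in particular f'(M) > 0 for all 0 < M < 1. -/
open Real Set Filter

theorem stmt_6 (a b κ : ℝ) (ha : 1 < a) (hb : 1 < b) (hκ : 0 < κ)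
    (p q f f' : ℝ → ℝ)
    (hpc : ContinuousOn p (Set.Ico 0 1))
    (hpos : ∀ M ∈ Set.Ico (0:ℝ) 1, 0 < p M)
    (hdec : AntitoneOn p (Set.Ico 0 1))
    (hq : ∀ M ∈ Set.Ioo (0:ℝ) 1,
      q M = (p M / M) * ∫ s in (0:ℝ)..M, s ^ a * (1 - s) ^ (-b) * (p s) ^ (-(2:ℝ)))
    (hf : ∀ M ∈ Set.Ioo (0:ℝ) 1, f M = Real.sqrt (q M / p M))
    (hf' : ∀ M ∈ Set.Ioo (0:ℝ) 1, HasDerivAt f (f' M) M) :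
    ∀ M ∈ Set.Ioo (0:ℝ) 1,
      (2 * f' M / f M = M ^ a * (1 - M) ^ (-b) * (p M) ^ (-(2:ℝ)) /
          (∫ s in (0:ℝ)..M, s ^ a * (1 - s) ^ (-b) * (p s) ^ (-(2:ℝ))) - 1 / M) ∧
      a / M ≤ 2 * f' M / f M ∧ 0 < f' M := by
  intro M hM
  obtain ⟨hM0, hM1⟩ := hM
  set g : ℝ → ℝ := fun s => s ^ a * (1 - s) ^ (-b) * p s ^ (-(2:ℝ)) with hgdef
  set I : ℝ → ℝ := fun u => ∫ s in (0:ℝ)..u, g s with hIdef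
  -- continuity of g on [0,1)
  have hgc : ContinuousOn g (Set.Ico 0 1) := by
    intro s hs
    have h1 : ContinuousWithinAt (fun s : ℝ => s ^ a) (Set.Ico 0 1) s :=
      (Real.continuousAt_rpow_const s a (Or.inr (by linarith))).continuousWithinAt
    have h2 : ContinuousWithinAt (fun s : ℝ => (1 - s) ^ (-b)) (Set.Ico 0 1) s := by
      apply ContinuousWithinAt.rpow_const
      · exact (continuous_const.sub continuous_id).continuousWithinAt
      · left; have h2 := hs.2; show (1:ℝ) - s ≠ 0; intro h; linarith
    have h3 : ContinuousWithinAt (fun s : ℝ => p s ^ (-(2:ℝ))) (Set.Ico 0 1) s :=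
      (hpc s hs).rpow_const (Or.inl (ne_of_gt (hpos s hs)))
    exact (h1.mul h2).mul h3
  have hsub : Set.uIcc (0:ℝ) M ⊆ Set.Ico 0 1 := by
    rw [Set.uIcc_of_le hM0.le]
    intro x hx; exact ⟨hx.1, lt_of_le_of_lt hx.2 hM1⟩
  have hint : IntervalIntegrable g MeasureTheory.volume 0 M :=
    (hgc.mono hsub).intervalIntegrable
  have hgM : ContinuousAt g M :=
    hgc.continuousAt (Filter.mem_of_superset (Ioo_mem_nhds hM0 hM1) Set.Ioo_subset_Ico_self)
  have hmeas : StronglyMeasurableAtFilter g (nhds M) MeasureTheory.volume :=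
    (hgc.mono (Set.Ioo_subset_Ico_self)).stronglyMeasurableAtFilter isOpen_Ioo M ⟨hM0, hM1⟩
  have hIder : HasDerivAt I (g M) M :=
    intervalIntegral.integral_hasDerivAt_right hint hmeas hgM
  -- positivity of I M
  have hgpos : ∀ x ∈ Set.Ioo (0:ℝ) M, 0 < g x := by
    intro x hx
    have hx1 : x < 1 := lt_trans hx.2 hM1
    have := hpos x ⟨hx.1.le, hx1⟩
    have h1 : (0:ℝ) < x ^ a := Real.rpow_pos_of_pos hx.1 a
    have h2 : (0:ℝ) < (1 - x) ^ (-b) := Real.rpow_pos_of_pos (by linarith) _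
    have h3 : (0:ℝ) < p x ^ (-(2:ℝ)) := Real.rpow_pos_of_pos this _
    positivity
  have hIpos : 0 < I M :=
    intervalIntegral.intervalIntegral_pos_of_pos_on hint hgpos hM0
  have hIne : I M ≠ 0 := ne_of_gt hIpos
  have hMne : M ≠ 0 := ne_of_gt hM0
  have hpMpos : 0 < p M := hpos M ⟨hM0.le, hM1⟩
  -- derivative of H u = I u / u
  have hHder : HasDerivAt (fun u => I u / u) ((g M * M - I M * 1) / M ^ 2) M :=
    hIder.div (hasDerivAt_id M) hMne
  have hHpos : 0 < I M / M := div_pos hIpos hM0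
  set s0 : ℝ := Real.sqrt (I M / M) with hs0def
  have hs0pos : 0 < s0 := Real.sqrt_pos.mpr hHpos
  have hcomp : HasDerivAt (fun u => Real.sqrt (I u / u))
      (((g M * M - I M * 1) / M ^ 2) / (2 * s0)) M :=
    hHder.sqrt (ne_of_gt hHpos)
  -- f equals sqrt (I u / u) near M
  have heq : f =ᶠ[nhds M] (fun u => Real.sqrt (I u / u)) := by
    filter_upwards [Ioo_mem_nhds hM0 hM1] with u hu
    rw [hf u hu, hq u hu]
    have hpu : p u ≠ 0 := ne_of_gt (hpos u ⟨hu.1.le, hu.2⟩)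
    have hu0 : (u:ℝ) ≠ 0 := ne_of_gt hu.1
    congr 1
    field_simp [hIdef]
    ring
  have hfd : HasDerivAt f (((g M * M - I M * 1) / M ^ 2) / (2 * s0)) M :=
    hcomp.congr_of_eventuallyEq heq
  have hf'M : f' M = ((g M * M - I M * 1) / M ^ 2) / (2 * s0) :=
    (hf' M ⟨hM0, hM1⟩).unique hfd
  have hfM : f M = s0 := by
    rw [hf M ⟨hM0, hM1⟩, hq M ⟨hM0, hM1⟩]
    congr 1
    field_simp [hIdef]
    ring
  have hss : s0 * s0 = I M / M := Real.mul_self_sqrt hHpos.le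
  -- main identity
  have hmain : 2 * f' M / f M = g M / I M - 1 / M := by
    rw [hf'M, hfM]
    rw [div_eq_iff (ne_of_gt hs0pos)]
    have : (g M / I M - 1 / M) * s0 * s0 = (g M / I M - 1 / M) * (I M / M) := by
      rw [mul_assoc, hss]
    field_simp at this ⊢
    nlinarith [hss, hs0pos]
  -- comparison bound
  set C : ℝ := (1 - M) ^ (-b) * p M ^ (-(2:ℝ)) with hCdef
  have hCpos : 0 < C := by
    have h2 : (0:ℝ) < (1 - M) ^ (-b) := Real.rpow_pos_of_pos (by linarith) _
    have h3 : (0:ℝ) < p M ^ (-(2:ℝ)) := Real.rpow_pos_of_pos hpMpos _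
    positivity
  have hint2 : IntervalIntegrable (fun s : ℝ => s ^ a * C) MeasureTheory.volume 0 M := by
    apply ContinuousOn.intervalIntegrable
    intro x hx
    exact ((Real.continuousAt_rpow_const x a (Or.inr (by linarith))).continuousWithinAt).mul
      continuousWithinAt_const
  have hcompare : I M ≤ M ^ (a + 1) / (a + 1) * C := by
    have h1 : I M ≤ ∫ s in (0:ℝ)..M, s ^ a * C := by
      apply intervalIntegral.integral_mono_on hM0.le hint hint2
      intro x hx
      have hx1 : x < 1 := lt_of_le_of_lt hx.2 hM1
      have hxm : x ∈ Set.Ico (0:ℝ) 1 := ⟨hx.1, hx1⟩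
      have hb1 : (1 - x) ^ (-b) ≤ (1 - M) ^ (-b) :=
        Real.rpow_le_rpow_of_nonpos (by linarith) (by linarith [hx.2]) (by linarith)
      have hb2 : p x ^ (-(2:ℝ)) ≤ p M ^ (-(2:ℝ)) := by
        have hpMx : p M ≤ p x := hdec hxm ⟨hM0.le, hM1⟩ hx.2
        exact Real.rpow_le_rpow_of_nonpos hpMpos hpMx (by norm_num)
      have hxa : (0:ℝ) ≤ x ^ a := Real.rpow_nonneg hx.1 a
      have hbp : (0:ℝ) < (1 - x) ^ (-b) := Real.rpow_pos_of_pos (by linarith) _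
      have hpp : (0:ℝ) ≤ p x ^ (-(2:ℝ)) := (Real.rpow_pos_of_pos (hpos x hxm) _).le
      calc x ^ a * (1 - x) ^ (-b) * p x ^ (-(2:ℝ))
          ≤ x ^ a * (1 - M) ^ (-b) * p x ^ (-(2:ℝ)) := by
            apply mul_le_mul_of_nonneg_right (mul_le_mul_of_nonneg_left hb1 hxa) hpp
        _ ≤ x ^ a * (1 - M) ^ (-b) * p M ^ (-(2:ℝ)) := by
            apply mul_le_mul_of_nonneg_left hb2
            have : (0:ℝ) < (1 - M) ^ (-b) := Real.rpow_pos_of_pos (by linarith) _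
            positivity
        _ = x ^ a * C := by rw [hCdef]; ring
    have h2 : (∫ s in (0:ℝ)..M, s ^ a * C) = M ^ (a + 1) / (a + 1) * C := by
      rw [intervalIntegral.integral_mul_const, integral_rpow (Or.inl (by linarith))]
      rw [Real.zero_rpow (by linarith)]
      ring
    linarith [h1, h2 ▸ h1]
  have hMa1 : M ^ (a + 1) = M ^ a * M := Real.rpow_add_one hMne a
  have hgMC : g M = M ^ a * C := by rw [hgdef, hCdef]; ring
  have hratio : (a + 1) / M ≤ g M / I M := by
    rw [div_le_div_iff₀ hM0 hIpos]
    have hMapos : (0:ℝ) < M ^ a := Real.rpow_pos_of_pos hM0 a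
    have : (a + 1) * I M ≤ (a + 1) * (M ^ (a + 1) / (a + 1) * C) :=
      mul_le_mul_of_nonneg_left hcompare (by linarith)
    calc (a + 1) * I M ≤ (a + 1) * (M ^ (a + 1) / (a + 1) * C) := this
      _ = M ^ (a + 1) * C := by field_simp
      _ = g M * M := by rw [hMa1, hgMC]; ring
  refine ⟨?_, ?_, ?_⟩
  · rw [hmain]
  · rw [hmain]
    have : a / M = (a + 1) / M - 1 / M := by field_simp; ring
    rw [this]
    linarith [hratio]
  · have hge : a / M ≤ 2 * f' M / f M := by
      rw [hmain]
      have : a / M = (a + 1) / M - 1 / M := by field_simp; ring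
      rw [this]; linarith [hratio]
    have haM : 0 < a / M := div_pos (by linarith) hM0
    have h2 : 0 < 2 * f' M / f M := lt_of_lt_of_le haM hge
    rw [hfM] at h2
    by_contra hle
    push_neg at hle
    have : 2 * f' M / s0 ≤ 0 := div_nonpos_of_nonpos_of_nonneg (by linarith) hs0pos.le
    linarith
end

section
/- Let a, b > 1, κ > 0, and let p, q satisfy the standing biofilm assumptions (p decreasing, p(1)=0, lim_{M→1} -(1-M)^{1+κ} p'(M)/p(M) = c > 0, q(M) = (p(M)/M) ∫₀^M s^a (1-s)^{-b} p(s)^{-2} ds). Define f(M) = √(q(M)/p(M)). Then there exists a constant C > 0 such that p(M)² f'(M) (M f'(M) + f(M)) ≥ C M^{a-1} / (1-M)^{1+b+κ} for all 0 < M < 1. -/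
open Real Set Filter MeasureTheory

lemma aux_exp_tendsto (β γ κ : ℝ) (hγ : 0 < γ) (hκ : 0 < κ) :
    Tendsto (fun y : ℝ => y ^ β * Real.exp (γ * y ^ (-κ))) (nhdsWithin 0 (Set.Ioi 0)) atTop := by
  have h1 : Tendsto (fun y : ℝ => y ^ (-κ)) (nhdsWithin 0 (Set.Ioi 0)) atTop := by
    refine ((tendsto_rpow_atTop hκ).comp tendsto_inv_nhdsGT_zero).congr' ?_
    filter_upwards [self_mem_nhdsWithin] with y (hy : (0:ℝ) < y)
    simp only [Function.comp_apply]
    rw [Real.inv_rpow hy.le, ← Real.rpow_neg hy.le]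
  have h2 : Tendsto (fun x : ℝ => x ^ (-(β/κ)) * Real.exp (γ * x)) atTop atTop := by
    have hmul : Tendsto (fun x : ℝ => γ * x) atTop atTop :=
      Tendsto.const_mul_atTop hγ tendsto_id
    have h3 := (tendsto_exp_div_rpow_atTop (β/κ)).comp hmul
    have h4 := h3.const_mul_atTop (Real.rpow_pos_of_pos hγ (β/κ))
    refine h4.congr' ?_
    filter_upwards [eventually_gt_atTop (0:ℝ)] with x hx
    simp only [Function.comp_apply]
    rw [Real.mul_rpow hγ.le hx.le, Real.rpow_neg hx.le]
    field_simp
  refine (h2.comp h1).congr' ?_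
  filter_upwards [self_mem_nhdsWithin] with y (hy : (0:ℝ) < y)
  simp only [Function.comp_apply]
  rw [← Real.rpow_mul hy.le]
  congr 2
  field_simp

set_option maxHeartbeats 1000000 in
theorem stmt_7 (a b κ c : ℝ) (ha : 1 < a) (hb : 1 < b) (hκ : 0 < κ) (hc : 0 < c)
    (p p' q f f' : ℝ → ℝ)
    (hcont : ContinuousOn p (Set.Icc 0 1))
    (hpos : ∀ M ∈ Set.Ico (0:ℝ) 1, 0 < p M)
    (hderiv : ∀ M ∈ Set.Ico (0:ℝ) 1, HasDerivAt p (p' M) M)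
    (hdec : StrictAntiOn p (Set.Icc 0 1))
    (hp1 : p 1 = 0)
    (hlim : Tendsto (fun M => -(1 - M) ^ (1 + κ) * p' M / p M)
      (nhdsWithin 1 (Set.Iio 1)) (nhds c))
    (hq : ∀ M ∈ Set.Ioo (0:ℝ) 1,
      q M = (p M / M) * ∫ s in (0:ℝ)..M, s ^ a * (1 - s) ^ (-b) * (p s) ^ (-(2:ℝ)))
    (hf : ∀ M ∈ Set.Ioo (0:ℝ) 1, f M = Real.sqrt (q M / p M))
    (hf' : ∀ M ∈ Set.Ioo (0:ℝ) 1, HasDerivAt f (f' M) M) :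
    ∃ C > 0, ∀ M ∈ Set.Ioo (0:ℝ) 1,
      C * M ^ (a - 1) / (1 - M) ^ (1 + b + κ)
        ≤ (p M) ^ 2 * f' M * (M * f' M + f M) := by
  obtain ⟨G, hGdef⟩ : ∃ G : ℝ → ℝ, G = fun s => s ^ a * (1 - s) ^ (-b) * (p s) ^ (-(2:ℝ)) :=
    ⟨_, rfl⟩
  obtain ⟨w, hwdef⟩ : ∃ w : ℝ → ℝ, w = fun s => (1 - s) ^ (-b) * (p s) ^ (-(2:ℝ)) := ⟨_, rfl⟩
  obtain ⟨g, hgdef⟩ : ∃ g : ℝ → ℝ, g = fun M => ∫ s in (0:ℝ)..M, G s := ⟨_, rfl⟩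
  have hq' : ∀ M ∈ Set.Ioo (0:ℝ) 1, q M = p M / M * g M := by
    intro M hM
    rw [hq M hM]
    simp only [hgdef, hGdef]
  have ha0 : (0:ℝ) < a := by linarith
  have hsubI : Set.Ico (0:ℝ) 1 ⊆ Set.Icc 0 1 := Set.Ico_subset_Icc_self
  -- basic positivity
  have hwpos : ∀ s ∈ Set.Ico (0:ℝ) 1, 0 < w s := by
    intro s hs
    rw [hwdef]
    exact mul_pos (Real.rpow_pos_of_pos (by linarith [hs.2] : (0:ℝ) < 1 - s) _)
      (Real.rpow_pos_of_pos (hpos s hs) _)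
  have hGw : ∀ s, G s = s ^ a * w s := by intro s; simp only [hGdef, hwdef]; ring
  have hGpos : ∀ s ∈ Set.Ioo (0:ℝ) 1, 0 < G s := by
    intro s hs
    rw [hGw]
    exact mul_pos (Real.rpow_pos_of_pos hs.1 _) (hwpos s ⟨hs.1.le, hs.2⟩)
  -- continuity of the integrand
  have hGcont : ContinuousOn G (Set.Ico (0:ℝ) 1) := by
    rw [hGdef]
    refine ContinuousOn.mul (ContinuousOn.mul ?_ ?_) ?_
    · exact fun s _ => (Real.continuousAt_rpow_const s a (Or.inr ha0.le)).continuousWithinAt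
    · intro s hs
      exact ((continuousAt_const.sub continuousAt_id).rpow_const
        (Or.inl (ne_of_gt (by linarith [hs.2] : (0:ℝ) < 1 - s)))).continuousWithinAt
    · exact (hcont.mono hsubI).rpow_const (fun s hs => Or.inl (hpos s hs).ne')
  have hGInt : ∀ x ∈ Set.Ico (0:ℝ) 1, ∀ y ∈ Set.Ico (0:ℝ) 1, IntervalIntegrable G volume x y :=
    fun x hx y hy => (hGcont.mono (Set.ordConnected_Ico.uIcc_subset hx hy)).intervalIntegrable
  have hmem : ∀ M ∈ Set.Ioo (0:ℝ) 1, M ∈ Set.Ico (0:ℝ) 1 := fun M hM => ⟨hM.1.le, hM.2⟩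
  have h0mem : (0:ℝ) ∈ Set.Ico (0:ℝ) 1 := ⟨le_refl 0, one_pos⟩
  -- FTC
  have hgd : ∀ M ∈ Set.Ioo (0:ℝ) 1, HasDerivAt g (G M) M := by
    intro M hM
    rw [hgdef]
    refine intervalIntegral.integral_hasDerivAt_right (hGInt 0 h0mem M (hmem M hM)) ?_ ?_
    · exact ContinuousOn.stronglyMeasurableAtFilter isOpen_Ioo
        (hGcont.mono Set.Ioo_subset_Ico_self) M hM
    · exact (hGcont.mono Set.Ioo_subset_Ico_self).continuousAt (isOpen_Ioo.mem_nhds hM)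
  have hgpos : ∀ M ∈ Set.Ioo (0:ℝ) 1, 0 < g M := by
    intro M hM
    rw [hgdef]
    exact intervalIntegral.intervalIntegral_pos_of_pos_on (hGInt 0 h0mem M (hmem M hM))
      (fun x hx => hGpos x ⟨hx.1, hx.2.trans hM.2⟩) hM.1
  -- monotonicity of w
  have hwmono : ∀ s ∈ Set.Ico (0:ℝ) 1, ∀ t ∈ Set.Ico (0:ℝ) 1, s ≤ t → w s ≤ w t := by
    intro s hs t ht hst
    rw [hwdef]
    simp only []
    have h1t : (0:ℝ) < 1 - t := by linarith [ht.2]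
    refine mul_le_mul ?_ ?_ (Real.rpow_pos_of_pos (hpos s hs) _).le
      (Real.rpow_pos_of_pos h1t _).le
    · exact Real.rpow_le_rpow_of_nonpos h1t (by linarith) (by linarith)
    · exact Real.rpow_le_rpow_of_nonpos (hpos t ht)
        (hdec.antitoneOn (hsubI hs) (hsubI ht) hst) (by norm_num)
  -- global upper bound for g
  have hgU : ∀ M ∈ Set.Ioo (0:ℝ) 1, (a+1) * g M ≤ M ^ (a+1) * w M := by
    intro M hM
    have hIcc : Set.Icc (0:ℝ) M ⊆ Set.Ico 0 1 := fun x hx => ⟨hx.1, lt_of_le_of_lt hx.2 hM.2⟩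
    have hint2 : IntervalIntegrable (fun s => s ^ a * w M) volume 0 M := by
      apply ContinuousOn.intervalIntegrable
      exact ContinuousOn.mul
        (fun s _ => (Real.continuousAt_rpow_const s a (Or.inr ha0.le)).continuousWithinAt)
        continuousOn_const
    have h1 : g M ≤ ∫ s in (0:ℝ)..M, s ^ a * w M := by
      rw [hgdef]
      apply intervalIntegral.integral_mono_on hM.1.le (hGInt 0 h0mem M (hmem M hM)) hint2
      intro s hs
      rw [hGw]
      exact mul_le_mul_of_nonneg_left (hwmono s (hIcc hs) M (hmem M hM) hs.2)
        (Real.rpow_nonneg hs.1 a)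
    have h2 : (∫ s in (0:ℝ)..M, s ^ a) = M ^ (a+1)/(a+1) := by
      rw [integral_rpow (Or.inl (by linarith : (-1:ℝ) < a)),
        Real.zero_rpow (by linarith : a+1 ≠ 0)]
      ring
    have h3 : g M ≤ M ^ (a+1)/(a+1) * w M := by
      calc g M ≤ ∫ s in (0:ℝ)..M, s ^ a * w M := h1
        _ = (∫ s in (0:ℝ)..M, s ^ a) * w M := intervalIntegral.integral_mul_const _ _
        _ = M ^ (a+1)/(a+1) * w M := by rw [h2]
    rw [div_mul_eq_mul_div, le_div_iff₀ (by linarith : (0:ℝ) < a+1)] at h3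
    linarith
  -- value and derivative of f
  have hfval : ∀ M ∈ Set.Ioo (0:ℝ) 1, f M = Real.sqrt (g M / M) := by
    intro M hM
    rw [hf M hM, hq' M hM]
    congr 1
    field_simp [(hpos M (hmem M hM)).ne', hM.1.ne']
  have hf'eq : ∀ M ∈ Set.Ioo (0:ℝ) 1,
      f' M = (G M * M - g M) / M^2 / (2 * Real.sqrt (g M / M)) := by
    intro M hM
    have hgMpos := hgpos M hM
    have hdiv : HasDerivAt (fun x => g x / x) ((G M * M - g M * 1) / M ^ 2) M :=
      (hgd M hM).div (hasDerivAt_id M) hM.1.ne'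
    have hsq : HasDerivAt (fun x => Real.sqrt (g x / x))
        ((G M * M - g M * 1) / M ^ 2 / (2 * Real.sqrt (g M / M))) M :=
      hdiv.sqrt (ne_of_gt (div_pos hgMpos hM.1))
    have hfd : HasDerivAt f ((G M * M - g M * 1) / M ^ 2 / (2 * Real.sqrt (g M / M))) M := by
      refine hsq.congr_of_eventuallyEq ?_
      filter_upwards [isOpen_Ioo.mem_nhds hM] with x hx
      exact hfval x hx
    rw [(hf' M hM).unique hfd, mul_one]
  -- key algebraic identity
  have hkey : ∀ M ∈ Set.Ioo (0:ℝ) 1,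
      p M ^ 2 * f' M * (M * f' M + f M)
        = p M ^ 2 * ((M * G M)^2 - (g M)^2) / (4 * M^2 * g M) := by
    intro M hM
    have hgMpos := hgpos M hM
    have hu2 : Real.sqrt (g M / M) ^ 2 = g M / M :=
      Real.sq_sqrt (div_nonneg hgMpos.le hM.1.le)
    have hupos : 0 < Real.sqrt (g M / M) := Real.sqrt_pos.mpr (div_pos hgMpos hM.1)
    rw [hf'eq M hM, hfval M hM]
    set u := Real.sqrt (g M / M) with hudef
    have hgMu : g M = M * u ^ 2 := by
      rw [hu2, mul_comm M _, div_mul_cancel₀ _ hM.1.ne']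
    rw [hgMu]
    field_simp [hupos.ne', hM.1.ne']
    ring
  -- rpow helper facts
  have hp2 : ∀ M ∈ Set.Ico (0:ℝ) 1, p M ^ 2 * p M ^ (-(2:ℝ)) = 1 := by
    intro M hM
    rw [← Real.rpow_natCast (p M) 2, ← Real.rpow_add (hpos M hM)]
    norm_num
  have he3 : ∀ M ∈ Set.Ico (0:ℝ) 1, p M ^ 2 * w M = (1 - M) ^ (-b) := by
    intro M hM
    rw [hwdef]
    simp only []
    rw [show p M ^ 2 * ((1-M) ^ (-b) * p M ^ (-(2:ℝ)))
      = (1-M)^(-b) * (p M ^2 * p M ^ (-(2:ℝ))) by ring, hp2 M hM, mul_one]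
  have he2 : ∀ M ∈ Set.Ioo (0:ℝ) 1, M ^ (a+1) = M ^ (a-1) * M^2 := by
    intro M hM
    rw [show a+1 = (a-1)+2 by ring, Real.rpow_add hM.1, ← Real.rpow_natCast M 2]
    norm_num
  have hMG : ∀ M ∈ Set.Ioo (0:ℝ) 1, M * G M = M ^ (a+1) * w M := by
    intro M hM
    rw [hGw, hwdef, Real.rpow_add hM.1, Real.rpow_one]
    ring
  -- Region A bound
  have hA : ∀ M ∈ Set.Ioo (0:ℝ) 1,
      (a+1 - (a+1)⁻¹)/4 * (M ^ (a-1) * (1-M) ^ (-b))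
        ≤ p M ^ 2 * ((M * G M)^2 - (g M)^2) / (4 * M^2 * g M) := by
    intro M hM
    obtain ⟨hM0, hM1⟩ := hM
    have hM' : M ∈ Set.Ioo (0:ℝ) 1 := ⟨hM0, hM1⟩
    have hp := hpos M (hmem M hM')
    have hwp := hwpos M (hmem M hM')
    have hgp := hgpos M hM'
    have hT : (0:ℝ) < M ^ (a+1) * w M := mul_pos (Real.rpow_pos_of_pos hM0 _) hwp
    have hU := hgU M hM'
    have ha1 : (0:ℝ) < a + 1 := by linarith
    have hclean : 4 * ((a+1 - (a+1)⁻¹)/4) * ((M ^ (a+1) * w M) * g M)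
        ≤ (M ^ (a+1) * w M)^2 - (g M)^2 := by
      set T := M ^ (a+1) * w M with hTdef
      have hfac : 0 ≤ (T - (a+1) * g M) * ((a+1) * T + g M) :=
        mul_nonneg (by linarith) (by positivity)
      have hinv : (a+1) * (a+1)⁻¹ = 1 := mul_inv_cancel₀ ha1.ne'
      have h5 : 0 ≤ (a+1) * ((T^2 - g M^2) - 4 * ((a+1 - (a+1)⁻¹)/4) * (T * g M)) := by
        rw [show (a+1) * ((T^2 - g M^2) - 4 * ((a+1 - (a+1)⁻¹)/4) * (T * g M))
          = (T - (a+1) * g M) * ((a+1) * T + g M) from by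
            linear_combination (T * g M) * hinv]
        exact hfac
      have h6 := (mul_nonneg_iff_of_pos_left ha1).mp h5
      linarith [h6]
    calc (a+1 - (a+1)⁻¹)/4 * (M ^ (a-1) * (1-M) ^ (-b))
        = p M ^2 * (4 * ((a+1 - (a+1)⁻¹)/4) * ((M ^ (a+1) * w M) * g M)) / (4 * M^2 * g M) := by
          rw [← he3 M (hmem M hM'), he2 M hM']
          field_simp
      _ ≤ p M ^2 * ((M ^ (a+1) * w M)^2 - (g M)^2) / (4 * M^2 * g M) := by
          have hD : (0:ℝ) < 4 * M^2 * g M := by positivity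
          exact (div_le_div_iff_of_pos_right hD).mpr (mul_le_mul_of_nonneg_left hclean (sq_nonneg (p M)))
      _ = p M ^ 2 * ((M * G M)^2 - (g M)^2) / (4 * M^2 * g M) := by rw [hMG M hM']
  -- choose M₀ with eventual properties near 1
  have hev1 : ∀ᶠ M in nhdsWithin 1 (Set.Iio 1), c/2 < -(1 - M) ^ (1 + κ) * p' M / p M :=
    Filter.Tendsto.eventually_const_lt (by linarith : c/2 < c) hlim
  have htend1M : Tendsto (fun M : ℝ => 1 - M) (nhdsWithin 1 (Set.Iio 1)) (nhds 0) := by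
    have h : Tendsto (fun M : ℝ => 1 - M) (nhds 1) (nhds 0) := by
      have h2 : Continuous (fun M : ℝ => 1 - M) := continuous_const.sub continuous_id
      have h3 := h2.tendsto 1
      simpa using h3
    exact h.mono_left nhdsWithin_le_nhds
  have htendk : Tendsto (fun M : ℝ => (1 - M) ^ κ) (nhdsWithin 1 (Set.Iio 1)) (nhds 0) := by
    have hcont0 : ContinuousAt (fun y : ℝ => y ^ κ) 0 :=
      Real.continuousAt_rpow_const 0 κ (Or.inr hκ.le)
    have h0 : (0:ℝ) ^ κ = 0 := Real.zero_rpow hκ.ne'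
    have h1 := hcont0.tendsto
    rw [h0] at h1
    exact h1.comp htend1M
  have hev2 : ∀ᶠ M in nhdsWithin 1 (Set.Iio 1), (|1+κ-b|+1) * (1 - M) ^ κ < c/2 := by
    have h : Tendsto (fun M : ℝ => (|1+κ-b|+1) * (1 - M) ^ κ)
        (nhdsWithin 1 (Set.Iio 1)) (nhds 0) := by
      simpa using htendk.const_mul (|1+κ-b|+1)
    exact h.eventually_lt_const (by positivity)
  obtain ⟨l, hl, hlsub⟩ := mem_nhdsLT_iff_exists_Ioo_subset.mp (hev1.and hev2)
  have hl1 : l < 1 := hl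
  set M₀ : ℝ := max ((l+1)/2) (1/2) with hM₀def
  have hM₀l : l < M₀ := lt_of_lt_of_le (by linarith) (le_max_left _ _)
  have hM₀1 : M₀ < 1 := max_lt (by linarith) (by norm_num)
  have hM₀half : (1/2:ℝ) ≤ M₀ := le_max_right _ _
  have hM₀0 : (0:ℝ) < M₀ := lt_of_lt_of_le (by norm_num) hM₀half
  have hM₀mem : M₀ ∈ Set.Ico (0:ℝ) 1 := ⟨hM₀0.le, hM₀1⟩
  have hprop : ∀ M, M₀ ≤ M → M < 1 →
      (c/2 < -(1 - M) ^ (1 + κ) * p' M / p M ∧ (|1+κ-b|+1) * (1 - M) ^ κ < c/2) := by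
    intro M h1 h2
    exact hlsub ⟨lt_of_lt_of_le hM₀l h1, h2⟩
  -- pointwise bound on log-derivative
  have hVle : ∀ x ∈ Set.Ico M₀ 1, p' x / p x ≤ -((c/2) * (1 - x) ^ (-κ-1)) := by
    intro x hx
    have h1x : (0:ℝ) < 1 - x := by linarith [hx.2]
    have hpx : 0 < p x := hpos x ⟨le_trans hM₀0.le hx.1, hx.2⟩
    have h1 := (hprop x hx.1 hx.2).1
    rw [lt_div_iff₀ hpx] at h1
    have hinv : (1-x) ^ (-κ-1) * (1-x) ^ (1+κ) = 1 := by
      rw [← Real.rpow_add h1x, show -κ-1+(1+κ) = 0 by ring, Real.rpow_zero]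
    have key : p' x ≤ -((c/2) * (1-x) ^ (-κ-1)) * p x := by
      have h2 : (1-x) ^ (-κ-1) * ((1-x) ^ (1+κ) * p' x) = p' x := by
        rw [← mul_assoc, hinv, one_mul]
      calc p' x = (1-x) ^ (-κ-1) * ((1-x) ^ (1+κ) * p' x) := h2.symm
        _ ≤ (1-x) ^ (-κ-1) * (-(c/2 * p x)) := by
            apply mul_le_mul_of_nonneg_left _ (Real.rpow_nonneg h1x.le _)
            nlinarith [h1]
        _ = -((c/2) * (1-x) ^ (-κ-1)) * p x := by ring
    rw [div_le_iff₀ hpx]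
    exact key
  -- antitone comparison function
  have hVd : ∀ x ∈ Set.Ioo M₀ 1,
      HasDerivAt (fun y => Real.log (p y) + (c/(2*κ)) * (1-y) ^ (-κ))
        (p' x / p x + (c/2) * (1-x) ^ (-κ-1)) x := by
    intro x hx
    have h1x : (0:ℝ) < 1 - x := by linarith [hx.2]
    have hxm : x ∈ Set.Ico (0:ℝ) 1 := ⟨by linarith [hx.1], hx.2⟩
    have hpx := hpos x hxm
    have hlg : HasDerivAt (fun y => Real.log (p y)) (p' x / p x) x :=
      (hderiv x hxm).log hpx.ne'
    have hin : HasDerivAt (fun y : ℝ => 1 - y) (-1) x := (hasDerivAt_id x).const_sub 1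
    have hrp : HasDerivAt (fun y : ℝ => (1-y) ^ (-κ)) ((-1) * (-κ) * (1-x) ^ (-κ-1)) x :=
      hin.rpow_const (Or.inl h1x.ne')
    have hsum := hlg.add (hrp.const_mul (c/(2*κ)))
    refine hsum.congr_deriv (Eq.symm ?_)
    field_simp
  have hVanti : AntitoneOn (fun y => Real.log (p y) + (c/(2*κ)) * (1-y) ^ (-κ))
      (Set.Ico M₀ 1) := by
    apply antitoneOn_of_deriv_nonpos (convex_Ico _ _)
    · apply ContinuousOn.add
      · apply ContinuousOn.log (hcont.mono (fun y hy => ⟨le_trans hM₀0.le hy.1, hy.2.le⟩))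
        intro y hy
        exact (hpos y ⟨le_trans hM₀0.le hy.1, hy.2⟩).ne'
      · apply continuousOn_const.mul
        intro y hy
        exact (((continuousAt_const.sub continuousAt_id).rpow_const
          (Or.inl (ne_of_gt (by linarith [hy.2] : (0:ℝ) < 1 - y))))).continuousWithinAt
    · intro x hx
      rw [interior_Ico] at hx
      exact (hVd x hx).differentiableAt.differentiableWithinAt
    · intro x hx
      rw [interior_Ico] at hx
      rw [(hVd x hx).deriv]
      have h2 := hVle x (Set.Ioo_subset_Ico_self hx)
      linarith
  -- exponential comparison for p^{-2}
  have hplog : ∀ s ∈ Set.Ico M₀ 1, ∀ M ∈ Set.Ico M₀ 1, s ≤ M →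
      (p s) ^ (-(2:ℝ)) ≤ (p M) ^ (-(2:ℝ)) *
        Real.exp ((c/κ) * ((1-s) ^ (-κ) - (1-M) ^ (-κ))) := by
    intro s hs M hM hsM
    have hps := hpos s ⟨le_trans hM₀0.le hs.1, hs.2⟩
    have hpM := hpos M ⟨le_trans hM₀0.le hM.1, hM.2⟩
    have hV := hVanti hs hM hsM
    rw [Real.rpow_def_of_pos hps, Real.rpow_def_of_pos hpM, ← Real.exp_add]
    apply Real.exp_le_exp.mpr
    have hck : c/κ = 2 * (c/(2*κ)) := by field_simp
    rw [hck]
    simp only [] at hV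
    nlinarith [hV]
  -- comparison integrand and antiderivative
  obtain ⟨E, hEdef⟩ : ∃ E : ℝ → ℝ, E = fun s => Real.exp ((c/κ) * (1-s) ^ (-κ)) := ⟨_, rfl⟩
  obtain ⟨hh, hhdef⟩ : ∃ hh : ℝ → ℝ, hh = fun s => (1-s) ^ (-b) * E s := ⟨_, rfl⟩
  obtain ⟨HH, hHHdef⟩ : ∃ HH : ℝ → ℝ, HH = fun s => (1-s) ^ (1+κ-b) * E s := ⟨_, rfl⟩
  obtain ⟨HD, hHDdef⟩ : ∃ HD : ℝ → ℝ,
    HD = fun s => E s * (c * (1-s) ^ (-b) - (1+κ-b) * (1-s) ^ (κ-b)) := ⟨_, rfl⟩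
  have hEpos : ∀ s, 0 < E s := by intro s; rw [hEdef]; exact Real.exp_pos _
  have hEcontAt : ∀ s : ℝ, s < 1 → ContinuousAt E s := by
    intro s hs
    rw [hEdef]
    exact (Real.continuous_exp.continuousAt).comp
      (continuousAt_const.mul (((continuousAt_const.sub continuousAt_id).rpow_const
        (Or.inl (ne_of_gt (by linarith : (0:ℝ) < 1 - s))))))
  have hhcont : ∀ x : ℝ, x < 1 → ∀ y : ℝ, y < 1 → IntervalIntegrable hh volume x y := by
    intro x hx y hy
    apply ContinuousOn.intervalIntegrable
    intro s hs
    have hs1 : s < 1 := lt_of_le_of_lt (hs.2) (max_lt hx hy)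
    rw [hhdef]
    exact (((continuousAt_const.sub continuousAt_id).rpow_const
      (Or.inl (ne_of_gt (by linarith : (0:ℝ) < 1 - s)))).mul (hEcontAt s hs1)).continuousWithinAt
  have hHDcont : ∀ x : ℝ, x < 1 → ∀ y : ℝ, y < 1 → IntervalIntegrable HD volume x y := by
    intro x hx y hy
    apply ContinuousOn.intervalIntegrable
    intro s hs
    have hs1 : s < 1 := lt_of_le_of_lt (hs.2) (max_lt hx hy)
    have h1s : (0:ℝ) < 1 - s := by linarith
    rw [hHDdef]
    refine ((hEcontAt s hs1).mul (ContinuousAt.sub ?_ ?_)).continuousWithinAt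
    · exact continuousAt_const.mul ((continuousAt_const.sub continuousAt_id).rpow_const
        (Or.inl (ne_of_gt h1s)))
    · exact continuousAt_const.mul ((continuousAt_const.sub continuousAt_id).rpow_const
        (Or.inl (ne_of_gt h1s)))
  have hHd : ∀ s : ℝ, s < 1 → HasDerivAt HH (HD s) s := by
    intro s hs
    have h1s : (0:ℝ) < 1 - s := by linarith
    have hin : HasDerivAt (fun y : ℝ => 1 - y) (-1) s := (hasDerivAt_id s).const_sub 1
    have hA : HasDerivAt (fun y : ℝ => (1-y) ^ (1+κ-b))
        ((-1) * (1+κ-b) * (1-s) ^ (1+κ-b-1)) s := hin.rpow_const (Or.inl h1s.ne')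
    have hu : HasDerivAt (fun y : ℝ => (c/κ) * (1-y) ^ (-κ))
        ((c/κ) * ((-1) * (-κ) * (1-s) ^ (-κ-1))) s :=
      (hin.rpow_const (Or.inl h1s.ne')).const_mul (c/κ)
    have hB : HasDerivAt (fun y : ℝ => Real.exp ((c/κ) * (1-y) ^ (-κ)))
        (Real.exp ((c/κ) * (1-s) ^ (-κ)) * ((c/κ) * ((-1) * (-κ) * (1-s) ^ (-κ-1)))) s := hu.exp
    have hprod := hA.mul hB
    have hEs : E s = Real.exp ((c/κ) * (1-s) ^ (-κ)) := by rw [hEdef]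
    have hfn : HH = fun y => (1-y) ^ (1+κ-b) * Real.exp ((c/κ) * (1-y) ^ (-κ)) := by
      rw [hHHdef, hEdef]
    rw [hfn]
    simp only [hHDdef, hEdef]
    refine hprod.congr_deriv (Eq.symm ?_)
    have e1 : (1-s) ^ (1+κ-b) * (1-s) ^ (-κ-1) = (1-s) ^ (-b) := by
      rw [← Real.rpow_add h1s]; congr 1; ring
    have e2 : (1-s) ^ (1+κ-b-1) = (1-s) ^ (κ-b) := by congr 1; ring
    rw [e2]
    have e4 : (c/κ) * ((-1:ℝ) * (-κ) * (1-s) ^ (-κ-1)) = c * (1-s) ^ (-κ-1) := by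
      rw [show (-1:ℝ) * (-κ) * (1-s) ^ (-κ-1) = κ * (1-s) ^ (-κ-1) by ring,
        ← mul_assoc, div_mul_cancel₀ c hκ.ne']
    rw [e4]
    linear_combination (-(c * Real.exp ((c/κ) * (1-s) ^ (-κ)))) * e1
  -- derivative comparison
  have hcomp : ∀ s, M₀ ≤ s → s < 1 → (c/2) * hh s ≤ HD s := by
    intro s hs0 hs1
    have h1s : (0:ℝ) < 1 - s := by linarith
    have hii := (hprop s hs0 hs1).2
    have e3 : (1-s) ^ (κ-b) = (1-s) ^ κ * (1-s) ^ (-b) := by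
      rw [← Real.rpow_add h1s]; congr 1; try ring
    have hbnd : (1+κ-b) * (1-s) ^ (κ-b) ≤ (c/2) * (1-s) ^ (-b) := by
      rw [e3]
      have hk0 : (0:ℝ) ≤ (1-s) ^ κ := Real.rpow_nonneg h1s.le _
      have hb0 : (0:ℝ) ≤ (1-s) ^ (-b) := Real.rpow_nonneg h1s.le _
      have h4 : |1+κ-b| * (1-s) ^ κ ≤ c/2 := by nlinarith [abs_nonneg (1+κ-b)]
      calc (1+κ-b) * ((1-s) ^ κ * (1-s) ^ (-b))
          ≤ |1+κ-b| * ((1-s) ^ κ * (1-s) ^ (-b)) :=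
            mul_le_mul_of_nonneg_right (le_abs_self _) (mul_nonneg hk0 hb0)
        _ = (|1+κ-b| * (1-s) ^ κ) * (1-s) ^ (-b) := by ring
        _ ≤ (c/2) * (1-s) ^ (-b) := mul_le_mul_of_nonneg_right h4 hb0
    rw [hhdef, hHDdef]
    have hE := (hEpos s).le
    calc (c/2) * ((1-s) ^ (-b) * E s) = E s * ((c/2) * (1-s) ^ (-b)) := by ring
      _ ≤ E s * (c * (1-s) ^ (-b) - (1+κ-b) * (1-s) ^ (κ-b)) :=
          mul_le_mul_of_nonneg_left (by linarith) hE
  -- integral estimate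
  have hIntEst : ∀ M, M₀ ≤ M → M < 1 → ∫ s in M₀..M, hh s ≤ (2/c) * HH M := by
    intro M hM0 hM1
    have huIcc : Set.uIcc M₀ M = Set.Icc M₀ M := Set.uIcc_of_le hM0
    have hFTC : ∫ s in M₀..M, HD s = HH M - HH M₀ := by
      apply intervalIntegral.integral_eq_sub_of_hasDerivAt
      · intro x hx
        rw [huIcc] at hx
        exact hHd x (lt_of_le_of_lt hx.2 hM1)
      · exact hHDcont M₀ hM₀1 M hM1
    have hmono2 : ∫ s in M₀..M, (c/2) * hh s ≤ ∫ s in M₀..M, HD s := by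
      apply intervalIntegral.integral_mono_on hM0
        ((hhcont M₀ hM₀1 M hM1).const_mul _) (hHDcont M₀ hM₀1 M hM1)
      intro x hx
      exact hcomp x hx.1 (lt_of_le_of_lt hx.2 hM1)
    rw [intervalIntegral.integral_const_mul, hFTC] at hmono2
    have hHH0 : 0 ≤ HH M₀ := by
      rw [hHHdef]
      exact mul_nonneg (Real.rpow_nonneg (by linarith) _) (hEpos M₀).le
    rw [show (2/c) * HH M = HH M / (c/2) from by field_simp, le_div_iff₀ (by positivity)]
    nlinarith [hmono2, hHH0]
  -- upper bound for g near 1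
  have hgB0 : ∀ M, M₀ ≤ M → M < 1 →
      g M ≤ g M₀ + (2/c) * ((1-M) ^ (1+κ-b) * (p M) ^ (-(2:ℝ))) := by
    intro M hM0 hM1
    have hMmem : M ∈ Set.Ico (0:ℝ) 1 := ⟨by linarith, hM1⟩
    have hpM := hpos M hMmem
    have hadd : g M₀ + ∫ s in M₀..M, G s = g M := by
      rw [hgdef]
      exact intervalIntegral.integral_add_adjacent_intervals
        (hGInt 0 h0mem M₀ hM₀mem) (hGInt M₀ hM₀mem M hMmem)
    obtain ⟨CE, hCEdef⟩ : ∃ CE : ℝ, CE = (p M) ^ (-(2:ℝ)) *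
      Real.exp (-((c/κ) * (1-M) ^ (-κ))) := ⟨_, rfl⟩
    have hCE0 : 0 ≤ CE := by
      rw [hCEdef]
      exact mul_nonneg (Real.rpow_nonneg hpM.le _) (Real.exp_pos _).le
    have hptw : ∀ s, s ∈ Set.Icc M₀ M → G s ≤ CE * hh s := by
      intro s hs
      have hsm : s ∈ Set.Ico M₀ 1 := ⟨hs.1, lt_of_le_of_lt hs.2 hM1⟩
      have hs0 : (0:ℝ) ≤ s := le_trans hM₀0.le hs.1
      have hs1 : s < 1 := hsm.2
      have h1s : (0:ℝ) < 1 - s := by linarith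
      have hsa : s ^ a ≤ 1 := Real.rpow_le_one hs0 (by linarith) ha0.le
      have hsa0 : (0:ℝ) ≤ s ^ a := Real.rpow_nonneg hs0 _
      have hplog2 := hplog s hsm M ⟨hM0, hM1⟩ hs.2
      have hrw : CE * hh s = (1-s) ^ (-b) *
          ((p M) ^ (-(2:ℝ)) * Real.exp ((c/κ) * ((1-s) ^ (-κ) - (1-M) ^ (-κ)))) := by
        rw [hCEdef, hhdef, hEdef]
        rw [show (c/κ) * ((1-s) ^ (-κ) - (1-M) ^ (-κ))
          = (c/κ) * (1-s) ^ (-κ) + -((c/κ) * (1-M) ^ (-κ)) by ring, Real.exp_add]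
        ring
      rw [hrw, hGdef]
      have hb0 : (0:ℝ) ≤ (1-s) ^ (-b) := Real.rpow_nonneg h1s.le _
      calc s ^ a * (1-s) ^ (-b) * (p s) ^ (-(2:ℝ))
          ≤ 1 * ((1-s) ^ (-b) * (p s) ^ (-(2:ℝ))) := by
            rw [mul_assoc]
            apply mul_le_mul_of_nonneg_right hsa
            exact mul_nonneg hb0 (Real.rpow_nonneg (hpos s ⟨hs0, hs1⟩).le _)
        _ = (1-s) ^ (-b) * (p s) ^ (-(2:ℝ)) := one_mul _
        _ ≤ (1-s) ^ (-b) * ((p M) ^ (-(2:ℝ)) *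
            Real.exp ((c/κ) * ((1-s) ^ (-κ) - (1-M) ^ (-κ)))) :=
            mul_le_mul_of_nonneg_left hplog2 hb0
    have hint1 : ∫ s in M₀..M, G s ≤ ∫ s in M₀..M, CE * hh s := by
      apply intervalIntegral.integral_mono_on hM0
        (hGInt M₀ hM₀mem M hMmem) ((hhcont M₀ hM₀1 M hM1).const_mul _) hptw
    have hint2 : ∫ s in M₀..M, CE * hh s ≤ CE * ((2/c) * HH M) := by
      rw [intervalIntegral.integral_const_mul]
      exact mul_le_mul_of_nonneg_left (hIntEst M hM0 hM1) hCE0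
    have hfinal : CE * ((2/c) * HH M) = (2/c) * ((1-M) ^ (1+κ-b) * (p M) ^ (-(2:ℝ))) := by
      rw [hCEdef, hHHdef, hEdef]
      rw [show (p M) ^ (-(2:ℝ)) * Real.exp (-((c/κ) * (1-M) ^ (-κ))) *
          ((2/c) * ((1-M) ^ (1+κ-b) * Real.exp ((c/κ) * (1-M) ^ (-κ))))
        = (2/c) * ((1-M) ^ (1+κ-b) * (p M) ^ (-(2:ℝ))) *
          (Real.exp (-((c/κ) * (1-M) ^ (-κ))) * Real.exp ((c/κ) * (1-M) ^ (-κ))) by ring]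
      rw [← Real.exp_add]
      norm_num
    linarith [hadd, hint1, hint2, hfinal.le, hfinal.ge]
  have hM₀Ico : M₀ ∈ Set.Ico M₀ 1 := ⟨le_rfl, hM₀1⟩
  -- divergence of (1-M)^(1+κ-b) p(M)^{-2}
  have htends : Tendsto (fun M => (1-M) ^ (1+κ-b) * (p M) ^ (-(2:ℝ)))
      (nhdsWithin 1 (Set.Iio 1)) atTop := by
    obtain ⟨C₂, hC₂def⟩ : ∃ C₂ : ℝ, C₂ = (p M₀) ^ (-(2:ℝ)) *
      Real.exp (-((c/κ) * (1-M₀) ^ (-κ))) := ⟨_, rfl⟩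
    have hC₂pos : 0 < C₂ := by
      rw [hC₂def]
      exact mul_pos (Real.rpow_pos_of_pos (hpos M₀ hM₀mem) _) (Real.exp_pos _)
    have hbase0 : Tendsto (fun M : ℝ => 1 - M) (nhdsWithin 1 (Set.Iio 1))
        (nhdsWithin 0 (Set.Ioi 0)) := by
      rw [tendsto_nhdsWithin_iff]
      refine ⟨htend1M, ?_⟩
      filter_upwards [self_mem_nhdsWithin] with x (hx : x < 1)
      exact Set.mem_Ioi.mpr (by linarith)
    have hbase : Tendsto (fun M : ℝ => (1-M) ^ (1+κ-b) * Real.exp ((c/κ) * (1-M) ^ (-κ)))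
        (nhdsWithin 1 (Set.Iio 1)) atTop :=
      (aux_exp_tendsto (1+κ-b) (c/κ) κ (by positivity) hκ).comp hbase0
    have hbase' := hbase.const_mul_atTop hC₂pos
    apply tendsto_atTop_mono' _ _ hbase'
    filter_upwards [Ioo_mem_nhdsLT_of_mem (Set.mem_Ioc.mpr ⟨hM₀1, le_refl (1:ℝ)⟩)] with M hM
    have hMm : M ∈ Set.Ico M₀ 1 := ⟨hM.1.le, hM.2⟩
    have hpl := hplog M₀ hM₀Ico M hMm hM.1.le
    rw [show (c/κ) * ((1-M₀) ^ (-κ) - (1-M) ^ (-κ))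
      = (c/κ) * (1-M₀) ^ (-κ) + -((c/κ) * (1-M) ^ (-κ)) by ring, Real.exp_add] at hpl
    have h2' : (p M₀) ^ (-(2:ℝ)) * Real.exp (-((c/κ) * (1-M₀) ^ (-κ))) *
        Real.exp ((c/κ) * (1-M) ^ (-κ)) ≤ (p M) ^ (-(2:ℝ)) := by
      have hstep := mul_le_mul_of_nonneg_right hpl
        (by positivity : (0:ℝ) ≤ Real.exp (-((c/κ) * (1-M₀) ^ (-κ))) *
          Real.exp ((c/κ) * (1-M) ^ (-κ)))
      have hone : (p M) ^ (-(2:ℝ)) *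
          (Real.exp ((c/κ) * (1-M₀) ^ (-κ)) * Real.exp (-((c/κ) * (1-M) ^ (-κ)))) *
          (Real.exp (-((c/κ) * (1-M₀) ^ (-κ))) * Real.exp ((c/κ) * (1-M) ^ (-κ)))
          = (p M) ^ (-(2:ℝ)) := by
        rw [show (p M) ^ (-(2:ℝ)) *
          (Real.exp ((c/κ) * (1-M₀) ^ (-κ)) * Real.exp (-((c/κ) * (1-M) ^ (-κ)))) *
          (Real.exp (-((c/κ) * (1-M₀) ^ (-κ))) * Real.exp ((c/κ) * (1-M) ^ (-κ)))
          = (p M) ^ (-(2:ℝ)) *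
          ((Real.exp ((c/κ) * (1-M₀) ^ (-κ)) * Real.exp (-((c/κ) * (1-M₀) ^ (-κ)))) *
           (Real.exp (-((c/κ) * (1-M) ^ (-κ))) * Real.exp ((c/κ) * (1-M) ^ (-κ)))) by ring,
          ← Real.exp_add, ← Real.exp_add, add_neg_cancel, neg_add_cancel, Real.exp_zero,
          one_mul, mul_one]
      calc (p M₀) ^ (-(2:ℝ)) * Real.exp (-((c/κ) * (1-M₀) ^ (-κ))) *
            Real.exp ((c/κ) * (1-M) ^ (-κ))
          = (p M₀) ^ (-(2:ℝ)) * (Real.exp (-((c/κ) * (1-M₀) ^ (-κ))) *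
            Real.exp ((c/κ) * (1-M) ^ (-κ))) := by ring
        _ ≤ (p M) ^ (-(2:ℝ)) *
            (Real.exp ((c/κ) * (1-M₀) ^ (-κ)) * Real.exp (-((c/κ) * (1-M) ^ (-κ)))) *
            (Real.exp (-((c/κ) * (1-M₀) ^ (-κ))) * Real.exp ((c/κ) * (1-M) ^ (-κ))) := hstep
        _ = (p M) ^ (-(2:ℝ)) := hone
    rw [hC₂def]
    have hg2 := mul_le_mul_of_nonneg_left h2'
      (Real.rpow_nonneg (by linarith [hM.2] : (0:ℝ) ≤ 1 - M) (1+κ-b))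
    nlinarith [hg2]
  -- choose M₂
  have hev3 : ∀ᶠ M in nhdsWithin 1 (Set.Iio 1),
      g M₀ ≤ (1-M) ^ (1+κ-b) * (p M) ^ (-(2:ℝ)) := htends.eventually_ge_atTop _
  have ht2 : Tendsto (fun M : ℝ => (1/2) * M ^ (a+1) - (1+2/c) * (1-M) ^ (1+κ))
      (nhdsWithin 1 (Set.Iio 1)) (nhds (1/2)) := by
    have ht2a : Tendsto (fun M : ℝ => M ^ (a+1)) (nhdsWithin 1 (Set.Iio 1)) (nhds 1) := by
      have hca : ContinuousAt (fun M : ℝ => M ^ (a+1)) 1 :=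
        Real.continuousAt_rpow_const 1 (a+1) (Or.inl one_ne_zero)
      have h1 := hca.tendsto
      rw [Real.one_rpow] at h1
      exact h1.mono_left nhdsWithin_le_nhds
    have ht2b : Tendsto (fun M : ℝ => (1-M) ^ (1+κ)) (nhdsWithin 1 (Set.Iio 1)) (nhds 0) := by
      have hcont0 : ContinuousAt (fun y : ℝ => y ^ (1+κ)) 0 :=
        Real.continuousAt_rpow_const 0 (1+κ) (Or.inr (by linarith))
      have h0 : (0:ℝ) ^ (1+κ) = 0 := Real.zero_rpow (by linarith)
      have h1 := hcont0.tendsto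
      rw [h0] at h1
      exact h1.comp htend1M
    have h3 := (ht2a.const_mul (1/2 : ℝ)).sub (ht2b.const_mul ((1:ℝ)+2/c))
    simpa using h3
  have hev4 : ∀ᶠ M in nhdsWithin 1 (Set.Iio 1),
      (1+2/c) * (1-M) ^ (1+κ) ≤ (1/2) * M ^ (a+1) := by
    filter_upwards [ht2.eventually_const_lt (by norm_num : (0:ℝ) < 1/2)] with M hM
    linarith
  obtain ⟨l', hl', hl'sub⟩ := mem_nhdsLT_iff_exists_Ioo_subset.mp (hev3.and hev4)
  have hl'1 : l' < 1 := hl'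
  set M₂ : ℝ := max ((l'+1)/2) M₀ with hM₂def
  have hM₂l : l' < M₂ := lt_of_lt_of_le (by linarith) (le_max_left _ _)
  have hM₂0 : M₀ ≤ M₂ := le_max_right _ _
  have hM₂1 : M₂ < 1 := max_lt (by linarith) hM₀1
  have hM₂pos : (0:ℝ) < M₂ := lt_of_lt_of_le hM₀0 hM₂0
  have hM₂prop : ∀ M, M₂ ≤ M → M < 1 →
      g M₀ ≤ (1-M) ^ (1+κ-b) * (p M) ^ (-(2:ℝ)) ∧
      (1+2/c) * (1-M) ^ (1+κ) ≤ (1/2) * M ^ (a+1) := by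
    intro M h1 h2
    exact hl'sub ⟨lt_of_lt_of_le hM₂l h1, h2⟩
  have hKc : (0:ℝ) < 1 + 2/c := by positivity
  -- region B bound
  have hB : ∀ M, M₂ ≤ M → M < 1 →
      3 * M₂ ^ (a+1) / (16 * (1+2/c)) * (M ^ (a-1) * (1-M) ^ (-(1+b+κ)))
        ≤ p M ^ 2 * ((M * G M)^2 - (g M)^2) / (4 * M^2 * g M) := by
    intro M hMM₂ hM1
    have hM' : M ∈ Set.Ioo (0:ℝ) 1 := ⟨lt_of_lt_of_le hM₂pos hMM₂, hM1⟩
    have h1M : (0:ℝ) < 1 - M := by linarith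
    have hpM := hpos M (hmem M hM')
    have hwM := hwpos M (hmem M hM')
    have hgM := hgpos M hM'
    have hsplit : (1-M) ^ (1+κ-b) = (1-M) ^ (1+κ) * (1-M) ^ (-b) := by
      rw [← Real.rpow_add h1M]; congr 1; try ring
    have hwMr : (1-M) ^ (1+κ-b) * (p M) ^ (-(2:ℝ)) = (1-M) ^ (1+κ) * w M := by
      rw [hsplit, hwdef]; ring
    have hgB1 : g M ≤ (1+2/c) * ((1-M) ^ (1+κ) * w M) := by
      have h1 := hgB0 M (le_trans hM₂0 hMM₂) hM1
      have h2 := (hM₂prop M hMM₂ hM1).1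
      rw [hwMr] at h1 h2
      linarith
    have hgB2 : g M ≤ (1/2) * (M ^ (a+1) * w M) := by
      have h3 := (hM₂prop M hMM₂ hM1).2
      calc g M ≤ (1+2/c) * ((1-M) ^ (1+κ) * w M) := hgB1
        _ = ((1+2/c) * (1-M) ^ (1+κ)) * w M := by ring
        _ ≤ ((1/2) * M ^ (a+1)) * w M := mul_le_mul_of_nonneg_right h3 hwM.le
        _ = (1/2) * (M ^ (a+1) * w M) := by ring
    have hT : (0:ℝ) < M ^ (a+1) * w M :=
      mul_pos (Real.rpow_pos_of_pos hM'.1 _) hwM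
    have hnum : (3/4) * (M ^ (a+1) * w M)^2 ≤ (M * G M)^2 - (g M)^2 := by
      rw [hMG M hM']
      nlinarith [hgB2, hgM, hT]
    have hnum0 : (0:ℝ) ≤ p M ^ 2 * ((M * G M)^2 - (g M)^2) :=
      mul_nonneg (sq_nonneg _) (le_trans (by positivity) hnum)
    have hYpos : (0:ℝ) < (1-M) ^ (1+κ) := Real.rpow_pos_of_pos h1M _
    have hZm : (1-M) ^ (-(1+b+κ)) = p M ^ 2 * w M / (1-M) ^ (1+κ) := by
      rw [eq_div_iff hYpos.ne', he3 M (hmem M hM'), ← Real.rpow_add h1M]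
      congr 1; ring
    have hden : 4 * M^2 * g M ≤ 4 * M^2 * ((1+2/c) * ((1-M) ^ (1+κ) * w M)) :=
      mul_le_mul_of_nonneg_left hgB1 (by positivity)
    calc 3 * M₂ ^ (a+1) / (16 * (1+2/c)) * (M ^ (a-1) * (1-M) ^ (-(1+b+κ)))
        ≤ 3 * M ^ (a+1) / (16 * (1+2/c)) * (M ^ (a-1) * (1-M) ^ (-(1+b+κ))) := by
          have hXnn : (0:ℝ) ≤ M ^ (a-1) * (1-M) ^ (-(1+b+κ)) :=
            mul_nonneg (Real.rpow_nonneg hM'.1.le _) (Real.rpow_nonneg h1M.le _)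
          have hrp : M₂ ^ (a+1) ≤ M ^ (a+1) :=
            Real.rpow_le_rpow hM₂pos.le hMM₂ (by linarith)
          apply mul_le_mul_of_nonneg_right _ hXnn
          apply div_le_div_of_nonneg_right (by linarith) (by positivity)
      _ = p M ^ 2 * ((3/4) * (M ^ (a+1) * w M)^2) /
            (4 * M^2 * ((1+2/c) * ((1-M) ^ (1+κ) * w M))) := by
          rw [hZm, he2 M hM']
          field_simp [hwM.ne', hYpos.ne', hM'.1.ne', hKc.ne']
          ring
      _ ≤ p M ^ 2 * ((M * G M)^2 - (g M)^2) /
            (4 * M^2 * ((1+2/c) * ((1-M) ^ (1+κ) * w M))) := by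
          have hDen2 : (0:ℝ) < 4 * M^2 * ((1+2/c) * ((1-M) ^ (1+κ) * w M)) :=
            mul_pos (by nlinarith [pow_pos hM'.1 2]) (mul_pos hKc (mul_pos hYpos hwM))
          apply (div_le_div_iff_of_pos_right hDen2).mpr
          exact mul_le_mul_of_nonneg_left hnum (sq_nonneg _)
      _ ≤ p M ^ 2 * ((M * G M)^2 - (g M)^2) / (4 * M^2 * g M) := by
          have hDg : (0:ℝ) < 4 * M^2 * g M := by nlinarith [pow_pos hM'.1 2, hgM]
          exact div_le_div_of_nonneg_left hnum0 hDg hden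
  -- final assembly
  obtain ⟨K₁, hK₁def⟩ : ∃ K₁ : ℝ, K₁ = (a+1 - (a+1)⁻¹)/4 := ⟨_, rfl⟩
  have hK₁pos : 0 < K₁ := by
    rw [hK₁def]
    have h1 : (a+1)⁻¹ ≤ 1 := by
      rw [inv_le_one_iff₀]
      right; linarith
    linarith
  obtain ⟨CB, hCBdef⟩ : ∃ CB : ℝ, CB = 3 * M₂ ^ (a+1) / (16 * (1+2/c)) := ⟨_, rfl⟩
  have hCBpos : 0 < CB := by
    rw [hCBdef]
    have := Real.rpow_pos_of_pos hM₂pos (a+1)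
    positivity
  have hY₂pos : (0:ℝ) < (1-M₂) ^ (1+κ) := Real.rpow_pos_of_pos (by linarith) _
  refine ⟨min (K₁ * (1-M₂) ^ (1+κ)) CB, lt_min (mul_pos hK₁pos hY₂pos) hCBpos, ?_⟩
  intro M hM
  have h1M : (0:ℝ) < 1 - M := by linarith [hM.2]
  have hDpos : (0:ℝ) < (1-M) ^ (1+b+κ) := Real.rpow_pos_of_pos h1M _
  have hMa0 : (0:ℝ) ≤ M ^ (a-1) := Real.rpow_nonneg hM.1.le _
  rw [hkey M hM, div_le_iff₀ hDpos]
  rcases le_or_gt M M₂ with hcase | hcase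
  · -- region A
    have hA' := hA M hM
    rw [← hK₁def] at hA'
    have hid : (1-M) ^ (-b) * (1-M) ^ (1+b+κ) = (1-M) ^ (1+κ) := by
      rw [← Real.rpow_add h1M]; congr 1; ring
    have hmon : (1-M₂) ^ (1+κ) ≤ (1-M) ^ (1+κ) :=
      Real.rpow_le_rpow (by linarith) (by linarith) (by linarith)
    calc min (K₁ * (1-M₂) ^ (1+κ)) CB * M ^ (a-1)
        ≤ (K₁ * (1-M₂) ^ (1+κ)) * M ^ (a-1) :=
          mul_le_mul_of_nonneg_right (min_le_left _ _) hMa0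
      _ ≤ (K₁ * (1-M) ^ (1+κ)) * M ^ (a-1) :=
          mul_le_mul_of_nonneg_right
            (mul_le_mul_of_nonneg_left hmon hK₁pos.le) hMa0
      _ = (K₁ * (M ^ (a-1) * (1-M) ^ (-b))) * (1-M) ^ (1+b+κ) := by
          rw [show (K₁ * (M ^ (a-1) * (1-M) ^ (-b))) * (1-M) ^ (1+b+κ)
            = (K₁ * ((1-M) ^ (-b) * (1-M) ^ (1+b+κ))) * M ^ (a-1) by ring, hid]
      _ ≤ (p M ^ 2 * ((M * G M)^2 - (g M)^2) / (4 * M^2 * g M)) * (1-M) ^ (1+b+κ) :=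
          mul_le_mul_of_nonneg_right hA' hDpos.le
  · -- region B
    have hB' := hB M hcase.le hM.2
    rw [← hCBdef] at hB'
    have hid2 : (1-M) ^ (-(1+b+κ)) * (1-M) ^ (1+b+κ) = 1 := by
      rw [← Real.rpow_add h1M, neg_add_cancel, Real.rpow_zero]
    calc min (K₁ * (1-M₂) ^ (1+κ)) CB * M ^ (a-1)
        ≤ CB * M ^ (a-1) := mul_le_mul_of_nonneg_right (min_le_right _ _) hMa0
      _ = (CB * (M ^ (a-1) * (1-M) ^ (-(1+b+κ)))) * (1-M) ^ (1+b+κ) := by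
          rw [show (CB * (M ^ (a-1) * (1-M) ^ (-(1+b+κ)))) * (1-M) ^ (1+b+κ)
            = (CB * ((1-M) ^ (-(1+b+κ)) * (1-M) ^ (1+b+κ))) * M ^ (a-1) by ring, hid2,
            mul_one]
      _ ≤ (p M ^ 2 * ((M * G M)^2 - (g M)^2) / (4 * M^2 * g M)) * (1-M) ^ (1+b+κ) :=
          mul_le_mul_of_nonneg_right hB' hDpos.le
end

section
/- Let a, b > 1 and define Q(M) = ∫₀^M s^a (1-s)^{-b} ds for 0 ≤ M < 1. Then there exists a constant D > 0 (depending only on a) such that for all M₁, M₂ ∈ [0,1): D (Q(M₁) − Q(M₂))(M₁ − M₂) ≥ (max{M₁, M₂})^a (M₁ − M₂)². -/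
open Real Set

private lemma contOn (a b : ℝ) (ha : 1 < a) :
    ContinuousOn (fun s : ℝ => s ^ a * (1 - s) ^ (-b)) (Set.Ico (0:ℝ) 1) := by
  apply ContinuousOn.mul
  · exact continuousOn_id.rpow_const fun s hs => Or.inr (by linarith)
  · exact (continuousOn_const.sub continuousOn_id).rpow_const
      fun s hs => Or.inl (by simp only [mem_Ico, id, Pi.sub_apply] at hs ⊢; intro h; linarith [hs.2])

private lemma key_alg (a : ℝ) (ha : 1 < a) {x y : ℝ} (h0 : 0 ≤ y) (hxy : y ≤ x) :
    x ^ a * (x - y) ≤ x ^ (a + 1) - y ^ (a + 1) := by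
  have hx0 : 0 ≤ x := le_trans h0 hxy
  rcases eq_or_lt_of_le hx0 with h | hx
  · have hy : y = 0 := le_antisymm (h ▸ hxy) h0
    simp [← h, hy, Real.zero_rpow (by linarith : a + 1 ≠ 0)]
  · have hxa : x ^ (a + 1) = x ^ a * x := Real.rpow_add_one (ne_of_gt hx) a
    have hya : y ^ (a + 1) = y ^ a * y := by
      rcases eq_or_lt_of_le h0 with h | hy
      · simp [← h, Real.zero_rpow (by linarith : a + 1 ≠ 0)]
      · exact Real.rpow_add_one (ne_of_gt hy) a
    have hmono : y ^ a ≤ x ^ a := Real.rpow_le_rpow h0 hxy (by linarith)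
    nlinarith

private lemma key_main (a b : ℝ) (ha : 1 < a) (hb : 1 < b)
    (M₁ : ℝ) (h1 : M₁ ∈ Set.Ico (0:ℝ) 1) (M₂ : ℝ) (h2 : M₂ ∈ Set.Ico (0:ℝ) 1)
    (hle : M₂ ≤ M₁) :
    M₁ ^ a * (M₁ - M₂) ^ 2
      ≤ (a + 1) * (((∫ s in (0:ℝ)..M₁, s ^ a * (1 - s) ^ (-b))
          - ∫ s in (0:ℝ)..M₂, s ^ a * (1 - s) ^ (-b)) * (M₁ - M₂)) := by
  obtain ⟨h10, h11⟩ := h1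
  obtain ⟨h20, h21⟩ := h2
  have hOrd : Set.OrdConnected (Set.Ico (0:ℝ) 1) := Set.ordConnected_Ico
  have hint : ∀ c d : ℝ, c ∈ Set.Ico (0:ℝ) 1 → d ∈ Set.Ico (0:ℝ) 1 →
      IntervalIntegrable (fun s : ℝ => s ^ a * (1 - s) ^ (-b)) MeasureTheory.volume c d :=
    fun c d hc hd => ((contOn a b ha).mono (hOrd.uIcc_subset hc hd)).intervalIntegrable
  have hzero : (0:ℝ) ∈ Set.Ico (0:ℝ) 1 := by constructor <;> norm_num
  have hsub : (∫ s in (0:ℝ)..M₁, s ^ a * (1 - s) ^ (-b))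
      - ∫ s in (0:ℝ)..M₂, s ^ a * (1 - s) ^ (-b)
      = ∫ s in M₂..M₁, s ^ a * (1 - s) ^ (-b) :=
    intervalIntegral.integral_interval_sub_left (hint 0 M₁ hzero ⟨h10, h11⟩)
      (hint 0 M₂ hzero ⟨h20, h21⟩)
  rw [hsub]
  have hmono : (∫ s in M₂..M₁, s ^ a) ≤ ∫ s in M₂..M₁, s ^ a * (1 - s) ^ (-b) := by
    apply intervalIntegral.integral_mono_on hle
    · apply ContinuousOn.intervalIntegrable
      apply ContinuousOn.rpow_const continuousOn_id
      intro s hs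
      rw [Set.uIcc_of_le hle] at hs
      exact Or.inr (by linarith)
    · exact hint M₂ M₁ ⟨h20, h21⟩ ⟨h10, h11⟩
    · intro s hs
      obtain ⟨hs1, hs2⟩ := hs
      have hs0 : 0 ≤ s := le_trans h20 hs1
      have hs1' : s < 1 := lt_of_le_of_lt hs2 h11
      have h1s : 0 < 1 - s := by linarith
      have : (1:ℝ) ≤ (1 - s) ^ (-b) := by
        rw [Real.rpow_neg h1s.le]
        rw [le_inv_comm₀ one_pos (Real.rpow_pos_of_pos h1s b)]
        simpa using Real.rpow_le_one h1s.le (by linarith) (by linarith)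
      nlinarith [Real.rpow_nonneg hs0 a]
  have hval : (∫ s in M₂..M₁, s ^ a) = (M₁ ^ (a + 1) - M₂ ^ (a + 1)) / (a + 1) :=
    integral_rpow (Or.inl (by linarith))
  have hkey := key_alg a ha h20 hle
  have hd : 0 ≤ M₁ - M₂ := by linarith
  have ha1 : (0:ℝ) < a + 1 := by linarith
  calc M₁ ^ a * (M₁ - M₂) ^ 2 = (M₁ ^ a * (M₁ - M₂)) * (M₁ - M₂) := by ring
    _ ≤ (M₁ ^ (a + 1) - M₂ ^ (a + 1)) * (M₁ - M₂) := by nlinarith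
    _ = (a + 1) * ((∫ s in M₂..M₁, s ^ a) * (M₁ - M₂)) := by
        rw [hval]; field_simp
    _ ≤ (a + 1) * ((∫ s in M₂..M₁, s ^ a * (1 - s) ^ (-b)) * (M₁ - M₂)) := by
        apply mul_le_mul_of_nonneg_left _ ha1.le
        exact mul_le_mul_of_nonneg_right hmono hd

theorem stmt_10 (a b : ℝ) (ha : 1 < a) (hb : 1 < b) :
    ∃ D > 0, ∀ M₁ ∈ Set.Ico (0:ℝ) 1, ∀ M₂ ∈ Set.Ico (0:ℝ) 1,
      (max M₁ M₂) ^ a * (M₁ - M₂) ^ 2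
        ≤ D * (((∫ s in (0:ℝ)..M₁, s ^ a * (1 - s) ^ (-b))
            - ∫ s in (0:ℝ)..M₂, s ^ a * (1 - s) ^ (-b)) * (M₁ - M₂)) := by
  refine ⟨a + 1, by linarith, fun M₁ h1 M₂ h2 => ?_⟩
  rcases le_total M₂ M₁ with h | h
  · rw [max_eq_left h]
    exact key_main a b ha hb M₁ h1 M₂ h2 h
  · rw [max_eq_right h]
    have := key_main a b ha hb M₂ h2 M₁ h1 h
    have e1 : (M₂ - M₁) ^ 2 = (M₁ - M₂) ^ 2 := by ring
    rw [e1] at this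
    calc M₂ ^ a * (M₁ - M₂) ^ 2
        ≤ (a + 1) * (((∫ s in (0:ℝ)..M₂, s ^ a * (1 - s) ^ (-b))
          - ∫ s in (0:ℝ)..M₁, s ^ a * (1 - s) ^ (-b)) * (M₂ - M₁)) := this
      _ = (a + 1) * (((∫ s in (0:ℝ)..M₁, s ^ a * (1 - s) ^ (-b))
          - ∫ s in (0:ℝ)..M₂, s ^ a * (1 - s) ^ (-b)) * (M₁ - M₂)) := by ring
end
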